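/- arXiv:1901.00914 — 2 statements merged into one kernel-verified Lean document; each statement's English description precedes it below -/
import Mathlib

section
/- Let y_1,...,y_m, a, b ∈ ℝ^p, λ > 0, M_y > 0 with ‖∑_{i=k}^{l} y_i‖ ≤ M_y·√(l−k+1) for all 1 ≤ k ≤ l ≤ m, and assume λ < (7m − √m)·M_y. Let x̂ minimize the one-interval group fused lasso objective G(x_1,...,x_m) = ∑_{i=1}^m ‖x_i − y_i‖² + λ(‖a − x_1‖ + ‖x_m − b‖ + ∑_{i=1}^{m−1} ‖x_i − x_{i+1}‖). Then max_{1 ≤ i ≤ m} ‖x̂_i‖ ≤ 25·M_y. -/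
set_option maxHeartbeats 1600000
open Finset RealInnerProductSpace

namespace GFL

/-- Limit helper: if `0 ≤ s*A + s^2*B` for all small positive `s`, with `B ≥ 0`, then `0 ≤ A`. -/
lemma nonneg_of_small (A B : ℝ) (hB : 0 ≤ B)
    (h : ∀ s : ℝ, 0 < s → s ≤ 1 → 0 ≤ s * A + s ^ 2 * B) : 0 ≤ A := by
  by_contra hA
  push_neg at hA
  set s : ℝ := min 1 (-A / (2 * (B + 1))) with hs
  have hB1 : (0:ℝ) < 2 * (B + 1) := by linarith
  have hApos : 0 < -A := by linarith
  have hs0 : 0 < s := lt_min one_pos (by positivity)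
  have hs1 : s ≤ 1 := min_le_left _ _
  have hsle : s ≤ -A / (2 * (B + 1)) := min_le_right _ _
  have h2 := h s hs0 hs1
  have hsB : s * B ≤ -A / 2 := by
    have h3 : s * (2 * (B + 1)) ≤ -A := by
      rw [← le_div_iff₀ hB1]; exact hsle
    nlinarith
  nlinarith [sq_nonneg s, mul_pos hs0 hs0]

variable {F : Type*} [NormedAddCommGroup F] [InnerProductSpace ℝ F]

lemma pert_left (P Q R : F) (s : ℝ) (hs : 0 ≤ s) :
    ‖P - (Q + s • R)‖ - ‖P - Q‖ ≤ s * ‖R‖ := by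
  have h1 : P - (Q + s • R) = (P - Q) - s • R := by abel
  have h2 : ‖(P - Q) - s • R‖ ≤ ‖P - Q‖ + ‖s • R‖ := norm_sub_le _ _
  rw [h1]
  rw [norm_smul, Real.norm_eq_abs, abs_of_nonneg hs] at h2
  linarith

lemma pert_right (P Q R : F) (s : ℝ) (hs : 0 ≤ s) :
    ‖(Q + s • R) - P‖ - ‖Q - P‖ ≤ s * ‖R‖ := by
  have h1 : (Q + s • R) - P = (Q - P) + s • R := by abel
  have h2 : ‖(Q - P) + s • R‖ ≤ ‖Q - P‖ + ‖s • R‖ := norm_add_le _ _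
  rw [h1]
  rw [norm_smul, Real.norm_eq_abs, abs_of_nonneg hs] at h2
  linarith

lemma pert_edge (x x' u u' : F) (s : ℝ) (hs : 0 ≤ s) :
    ‖(x + s • u) - (x' + s • u')‖ - ‖x - x'‖ ≤ s * ‖u - u'‖ := by
  have h1 : (x + s • u) - (x' + s • u') = (x - x') + s • (u - u') := by
    rw [smul_sub]; abel
  have h2 : ‖(x - x') + s • (u - u')‖ ≤ ‖x - x'‖ + ‖s • (u - u')‖ := norm_add_le _ _
  rw [h1]
  rw [norm_smul, Real.norm_eq_abs, abs_of_nonneg hs] at h2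
  linarith

lemma pert_edge_exact (x x' c : F) (s : ℝ) (hs0 : 0 ≤ s) (hs1 : s ≤ 1) :
    ‖(x + s • (c - x)) - (x' + s • (c - x'))‖ - ‖x - x'‖ = -(s * ‖x - x'‖) := by
  have h1 : (x + s • (c - x)) - (x' + s • (c - x')) = (1 - s) • (x - x') := by
    module
  rw [h1, norm_smul, Real.norm_eq_abs, abs_of_nonneg (by linarith : (0:ℝ) ≤ 1 - s)]
  ring

/-- The one-interval group fused lasso objective. -/
noncomputable def En (m : ℕ) (y : ℕ → F) (a b : F) (lam : ℝ) (z : ℕ → F) : ℝ :=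
  ∑ i ∈ Finset.Icc 1 m, ‖z i - y i‖ ^ 2
    + lam * (‖a - z 1‖ + ‖z m - b‖ + ∑ i ∈ Finset.Icc 1 (m - 1), ‖z i - z (i + 1)‖)

variable {m : ℕ} {y : ℕ → F} {a b : F} {lam : ℝ} {xh : ℕ → F}

/-- Master comparison inequality: perturbing the minimizer by `s • u`. -/
lemma master (hopt : ∀ z : ℕ → F, En m y a b lam xh ≤ En m y a b lam z)
    (u : ℕ → F) (s : ℝ) :
    0 ≤ ∑ i ∈ Finset.Icc 1 m, (2 * s * ⟪u i, xh i - y i⟫ + s ^ 2 * ‖u i‖ ^ 2)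
      + lam * ((‖a - (xh 1 + s • u 1)‖ - ‖a - xh 1‖)
        + (‖(xh m + s • u m) - b‖ - ‖xh m - b‖)
        + ∑ i ∈ Finset.Icc 1 (m - 1),
            (‖(xh i + s • u i) - (xh (i + 1) + s • u (i + 1))‖ - ‖xh i - xh (i + 1)‖)) := by
  have h := hopt (fun i => xh i + s • u i)
  unfold En at h
  simp only at h
  have hq : ∀ i : ℕ, ‖(xh i + s • u i) - y i‖ ^ 2
      = ‖xh i - y i‖ ^ 2 + (2 * s * ⟪u i, xh i - y i⟫ + s ^ 2 * ‖u i‖ ^ 2) := by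
    intro i
    have : (xh i + s • u i) - y i = (xh i - y i) + s • u i := by abel
    rw [this, norm_add_sq_real, real_inner_smul_right, real_inner_comm,
      norm_smul, Real.norm_eq_abs, mul_pow, sq_abs]
    ring
  have hsum : ∑ i ∈ Finset.Icc 1 m, ‖(xh i + s • u i) - y i‖ ^ 2
      = ∑ i ∈ Finset.Icc 1 m, ‖xh i - y i‖ ^ 2
        + ∑ i ∈ Finset.Icc 1 m, (2 * s * ⟪u i, xh i - y i⟫ + s ^ 2 * ‖u i‖ ^ 2) := by
    rw [← Finset.sum_add_distrib]
    exact Finset.sum_congr rfl fun i _ => hq i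
  have hedge : ∑ i ∈ Finset.Icc 1 (m-1), ‖(xh i + s • u i) - (xh (i + 1) + s • u (i + 1))‖
      = ∑ i ∈ Finset.Icc 1 (m-1), ‖xh i - xh (i + 1)‖
        + ∑ i ∈ Finset.Icc 1 (m - 1),
            (‖(xh i + s • u i) - (xh (i + 1) + s • u (i + 1))‖ - ‖xh i - xh (i + 1)‖) := by
    rw [← Finset.sum_add_distrib]
    exact Finset.sum_congr rfl fun i _ => by ring
  rw [hsum, hedge] at h
  linarith [h]

/-- Triangle-bound master: for any displacement field `u`. -/
lemma master_tri (hlam : 0 < lam)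
    (hopt : ∀ z : ℕ → F, En m y a b lam xh ≤ En m y a b lam z) (u : ℕ → F) :
    0 ≤ 2 * ∑ i ∈ Finset.Icc 1 m, ⟪u i, xh i - y i⟫
      + lam * (‖u 1‖ + ‖u m‖ + ∑ i ∈ Finset.Icc 1 (m - 1), ‖u i - u (i + 1)‖) := by
  set A : ℝ := 2 * ∑ i ∈ Finset.Icc 1 m, ⟪u i, xh i - y i⟫
    + lam * (‖u 1‖ + ‖u m‖ + ∑ i ∈ Finset.Icc 1 (m - 1), ‖u i - u (i + 1)‖) with hA
  refine nonneg_of_small A (∑ i ∈ Finset.Icc 1 m, ‖u i‖ ^ 2)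
    (Finset.sum_nonneg fun i _ => by positivity) (fun s hs0 hs1 => ?_)
  have h := master hopt u s
  have h1 : ‖a - (xh 1 + s • u 1)‖ - ‖a - xh 1‖ ≤ s * ‖u 1‖ := pert_left _ _ _ _ hs0.le
  have h2 : ‖(xh m + s • u m) - b‖ - ‖xh m - b‖ ≤ s * ‖u m‖ := pert_right _ _ _ _ hs0.le
  have h3 : ∑ i ∈ Finset.Icc 1 (m - 1),
      (‖(xh i + s • u i) - (xh (i + 1) + s • u (i + 1))‖ - ‖xh i - xh (i + 1)‖)
      ≤ ∑ i ∈ Finset.Icc 1 (m - 1), s * ‖u i - u (i + 1)‖ :=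
    Finset.sum_le_sum fun i _ => pert_edge _ _ _ _ _ hs0.le
  have h4 : ∑ i ∈ Finset.Icc 1 m, (2 * s * ⟪u i, xh i - y i⟫ + s ^ 2 * ‖u i‖ ^ 2)
      = s * (2 * ∑ i ∈ Finset.Icc 1 m, ⟪u i, xh i - y i⟫)
        + s ^ 2 * ∑ i ∈ Finset.Icc 1 m, ‖u i‖ ^ 2 := by
    rw [Finset.sum_add_distrib, ← Finset.mul_sum, ← Finset.mul_sum]; ring
  have h5 : ∑ i ∈ Finset.Icc 1 (m - 1), s * ‖u i - u (i + 1)‖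
      = s * ∑ i ∈ Finset.Icc 1 (m - 1), ‖u i - u (i + 1)‖ := by rw [Finset.mul_sum]
  rw [h4] at h
  have hle : lam * ((‖a - (xh 1 + s • u 1)‖ - ‖a - xh 1‖)
        + (‖(xh m + s • u m) - b‖ - ‖xh m - b‖)
        + ∑ i ∈ Finset.Icc 1 (m - 1),
            (‖(xh i + s • u i) - (xh (i + 1) + s • u (i + 1))‖ - ‖xh i - xh (i + 1)‖))
      ≤ lam * (s * (‖u 1‖ + ‖u m‖ + ∑ i ∈ Finset.Icc 1 (m - 1), ‖u i - u (i + 1)‖)) := by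
    apply mul_le_mul_of_nonneg_left _ hlam.le
    rw [h5] at h3
    nlinarith [h3, h1, h2]
  have : 0 ≤ s * (2 * ∑ i ∈ Finset.Icc 1 m, ⟪u i, xh i - y i⟫)
      + s ^ 2 * ∑ i ∈ Finset.Icc 1 m, ‖u i‖ ^ 2
      + lam * (s * (‖u 1‖ + ‖u m‖ + ∑ i ∈ Finset.Icc 1 (m - 1), ‖u i - u (i + 1)‖)) := by
    linarith [h, hle]
  rw [hA]; nlinarith [this]

lemma sum_ite_le (s : Finset ℕ) (t : ℕ) (c : ℝ) (hc : 0 ≤ c) :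
    ∑ i ∈ s, (if i = t then c else 0) ≤ c := by
  rw [Finset.sum_ite_eq' s t (fun _ => c)]
  split_ifs <;> simp [hc]

/-- Full-window bound. -/
lemma window_full (hlam : 0 < lam) (hm : 1 ≤ m)
    (hopt : ∀ z : ℕ → F, En m y a b lam xh ≤ En m y a b lam z) :
    ‖∑ i ∈ Finset.Icc 1 m, (xh i - y i)‖ ≤ lam := by
  set S : F := ∑ i ∈ Finset.Icc 1 m, (xh i - y i) with hS
  rcases eq_or_ne S 0 with h0 | h0
  · rw [h0]; simpa using hlam.le
  set e : F := -(‖S‖⁻¹ • S) with he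
  have hne : ‖e‖ = 1 := by
    rw [he, norm_neg, norm_smul, norm_inv, norm_norm,
      inv_mul_cancel₀ (norm_ne_zero_iff.mpr h0)]
  have h := master_tri hlam hopt (fun _ => e)
  have hip : ∑ i ∈ Finset.Icc 1 m, ⟪e, xh i - y i⟫ = ⟪e, S⟫ := by
    rw [hS, inner_sum]
  have hes : ⟪e, S⟫ = -‖S‖ := by
    rw [he, inner_neg_left, real_inner_smul_left, real_inner_self_eq_norm_sq,
      sq, inv_mul_cancel_left₀ (norm_ne_zero_iff.mpr h0)]
  rw [hip, hes] at h
  simp only [sub_self, norm_zero, Finset.sum_const_zero, hne] at h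
  linarith

/-- Partial-window bound (crude constant). -/
lemma window_partial (hlam : 0 < lam) (k l : ℕ) (hk : 1 ≤ k) (hl : l ≤ m)
    (hopt : ∀ z : ℕ → F, En m y a b lam xh ≤ En m y a b lam z) :
    ‖∑ i ∈ Finset.Icc k l, (xh i - y i)‖ ≤ 2 * lam := by
  set S : F := ∑ i ∈ Finset.Icc k l, (xh i - y i) with hS
  rcases eq_or_ne S 0 with h0 | h0
  · rw [h0]; simpa using by linarith
  set e : F := -(‖S‖⁻¹ • S) with he
  have hne : ‖e‖ = 1 := by
    rw [he, norm_neg, norm_smul, norm_inv, norm_norm,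
      inv_mul_cancel₀ (norm_ne_zero_iff.mpr h0)]
  set u : ℕ → F := fun i => if i ∈ Finset.Icc k l then e else 0 with hu
  have h := master_tri hlam hopt u
  have hip : ∑ i ∈ Finset.Icc 1 m, ⟪u i, xh i - y i⟫ = ⟪e, S⟫ := by
    have h1 : ∀ i, ⟪u i, xh i - y i⟫ = if i ∈ Finset.Icc k l then ⟪e, xh i - y i⟫ else 0 := by
      intro i
      simp only [hu]
      split_ifs <;> simp
    calc ∑ i ∈ Finset.Icc 1 m, ⟪u i, xh i - y i⟫
        = ∑ i ∈ Finset.Icc 1 m, (if i ∈ Finset.Icc k l then ⟪e, xh i - y i⟫ else 0) :=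
          Finset.sum_congr rfl fun i _ => h1 i
      _ = ∑ i ∈ Finset.Icc 1 m ∩ Finset.Icc k l, ⟪e, xh i - y i⟫ := by
          rw [Finset.sum_ite_mem]
      _ = ∑ i ∈ Finset.Icc k l, ⟪e, xh i - y i⟫ := by
          congr 1
          refine Finset.inter_eq_right.mpr ?_
          intro i hi
          simp only [Finset.mem_Icc] at hi ⊢
          omega
      _ = ⟪e, S⟫ := by rw [hS, inner_sum]
  have hes : ⟪e, S⟫ = -‖S‖ := by
    rw [he, inner_neg_left, real_inner_smul_left, real_inner_self_eq_norm_sq,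
      sq, inv_mul_cancel_left₀ (norm_ne_zero_iff.mpr h0)]
  have hu1 : ‖u 1‖ ≤ 1 := by simp only [hu]; split_ifs <;> simp [hne]
  have hum : ‖u m‖ ≤ 1 := by simp only [hu]; split_ifs <;> simp [hne]
  have hedge : ∑ i ∈ Finset.Icc 1 (m - 1), ‖u i - u (i + 1)‖ ≤ 2 := by
    have hpt : ∀ i ∈ Finset.Icc 1 (m - 1), ‖u i - u (i + 1)‖
        ≤ (if i = k - 1 then 1 else 0) + (if i = l then 1 else 0) := by
      intro i _
      have hnn1 : (0:ℝ) ≤ if i = k - 1 then 1 else 0 := by positivity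
      have hnn2 : (0:ℝ) ≤ if i = l then 1 else 0 := by positivity
      by_cases h1 : i ∈ Finset.Icc k l <;> by_cases h2 : i + 1 ∈ Finset.Icc k l <;>
        simp only [hu, h1, h2, if_true, if_false]
      · simp only [sub_self, norm_zero]; positivity
      · -- i ∈ [k,l], i+1 ∉ : i = l
        have hil : i = l := by simp only [Finset.mem_Icc] at h1 h2; omega
        have h5 : ‖e - 0‖ = 1 := by simp [hne]
        rw [h5, hil, if_pos rfl]
        have h6 : (0:ℝ) ≤ if l = k - 1 then 1 else 0 := by positivity
        linarith
      · -- i ∉, i+1 ∈ : i = k - 1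
        have hik : i = k - 1 := by simp only [Finset.mem_Icc] at h1 h2; omega
        have h5 : ‖(0:F) - e‖ = 1 := by simp [hne]
        rw [h5, hik, if_pos rfl]
        have h6 : (0:ℝ) ≤ if k - 1 = l then 1 else 0 := by positivity
        linarith
      · simp only [sub_self, norm_zero]; positivity
    calc ∑ i ∈ Finset.Icc 1 (m - 1), ‖u i - u (i + 1)‖
        ≤ ∑ i ∈ Finset.Icc 1 (m - 1),
            ((if i = k - 1 then (1:ℝ) else 0) + (if i = l then 1 else 0)) :=
          Finset.sum_le_sum hpt
      _ = ∑ i ∈ Finset.Icc 1 (m - 1), (if i = k - 1 then (1:ℝ) else 0)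
          + ∑ i ∈ Finset.Icc 1 (m - 1), (if i = l then (1:ℝ) else 0) :=
          Finset.sum_add_distrib
      _ ≤ 1 + 1 := add_le_add (sum_ite_le _ _ _ zero_le_one) (sum_ite_le _ _ _ zero_le_one)
      _ = 2 := by norm_num
  rw [hip, hes] at h
  have : lam * (‖u 1‖ + ‖u m‖ + ∑ i ∈ Finset.Icc 1 (m - 1), ‖u i - u (i + 1)‖) ≤ lam * 4 := by
    apply mul_le_mul_of_nonneg_left _ hlam.le
    linarith
  linarith

/-- Pointwise residual bound (crude constant). -/
lemma pointwise (hlam : 0 < lam) (t : ℕ) (ht1 : 1 ≤ t) (htm : t ≤ m)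
    (hopt : ∀ z : ℕ → F, En m y a b lam xh ≤ En m y a b lam z) :
    ‖xh t - y t‖ ≤ 2 * lam := by
  set w : F := xh t - y t with hw
  set u : ℕ → F := fun i => if i = t then -w else 0 with hu
  have h := master_tri hlam hopt u
  have hip : ∑ i ∈ Finset.Icc 1 m, ⟪u i, xh i - y i⟫ = -‖w‖ ^ 2 := by
    have h1 : ∀ i, ⟪u i, xh i - y i⟫ = if i = t then -‖w‖^2 else 0 := by
      intro i
      simp only [hu]
      split_ifs with hit
      · subst hit
        rw [← hw, inner_neg_left, real_inner_self_eq_norm_sq]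
      · rw [inner_zero_left]
    rw [Finset.sum_congr rfl fun i _ => h1 i, Finset.sum_ite_eq' (Finset.Icc 1 m) t]
    split_ifs with hmem
    · rfl
    · exfalso; exact hmem (Finset.mem_Icc.mpr ⟨ht1, htm⟩)
  have hle : ∀ i, ‖u i‖ ≤ ‖w‖ := by
    intro i; simp only [hu]; split_ifs <;> simp
  have hedge : ∑ i ∈ Finset.Icc 1 (m - 1), ‖u i - u (i + 1)‖ ≤ 2 * ‖w‖ := by
    have hpt : ∀ i ∈ Finset.Icc 1 (m - 1), ‖u i - u (i + 1)‖
        ≤ ‖u i‖ + ‖u (i+1)‖ := fun i _ => norm_sub_le _ _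
    have h2 : ∀ i ∈ Finset.Icc 1 (m-1), ‖u i‖ + ‖u (i+1)‖
        ≤ (if i = t then ‖w‖ else 0) + (if i = t - 1 then ‖w‖ else 0) := by
      intro i hi
      simp only [Finset.mem_Icc] at hi
      have e1 : ‖u i‖ = if i = t then ‖w‖ else 0 := by
        simp only [hu]; split_ifs <;> simp
      have e2 : ‖u (i+1)‖ = if i = t - 1 then ‖w‖ else 0 := by
        simp only [hu]
        split_ifs with p1 p2 p2
        · simp
        · exfalso; omega
        · exfalso; omega
        · simp
      rw [e1, e2]
    calc ∑ i ∈ Finset.Icc 1 (m - 1), ‖u i - u (i + 1)‖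
        ≤ ∑ i ∈ Finset.Icc 1 (m - 1),
            ((if i = t then ‖w‖ else 0) + (if i = t - 1 then ‖w‖ else 0)) :=
          Finset.sum_le_sum (fun i hi => le_trans (hpt i hi) (h2 i hi))
      _ = ∑ i ∈ Finset.Icc 1 (m - 1), (if i = t then ‖w‖ else 0)
          + ∑ i ∈ Finset.Icc 1 (m - 1), (if i = t - 1 then ‖w‖ else 0) :=
          Finset.sum_add_distrib
      _ ≤ ‖w‖ + ‖w‖ := add_le_add (sum_ite_le _ _ _ (norm_nonneg w))
            (sum_ite_le _ _ _ (norm_nonneg w))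
      _ = 2 * ‖w‖ := by ring
  rw [hip] at h
  have : lam * (‖u 1‖ + ‖u m‖ + ∑ i ∈ Finset.Icc 1 (m - 1), ‖u i - u (i + 1)‖)
      ≤ lam * (4 * ‖w‖) := by
    apply mul_le_mul_of_nonneg_left _ hlam.le
    linarith [hle 1, hle m]
  have h6 : 0 ≤ -2 * ‖w‖^2 + lam * (4 * ‖w‖) := by linarith
  rcases eq_or_lt_of_le (norm_nonneg w) with h7 | h7
  · rw [← h7]; positivity
  · nlinarith

/-- Window contraction inequality toward an arbitrary center `c`. -/
lemma contract (hlam : 0 < lam) (k l : ℕ) (hk : 1 ≤ k) (hkl : k ≤ l) (hl : l ≤ m) (c : F)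
    (hopt : ∀ z : ℕ → F, En m y a b lam xh ≤ En m y a b lam z) :
    2 * ∑ i ∈ Finset.Icc k l, ⟪xh i - c, xh i - y i⟫
      + lam * ∑ i ∈ Finset.Icc k (l - 1), ‖xh i - xh (i + 1)‖
      ≤ lam * (‖xh k - c‖ + ‖xh l - c‖) := by
  set u : ℕ → F := fun i => if i ∈ Finset.Icc k l then c - xh i else 0 with hu
  set A : ℝ := 2 * ∑ i ∈ Finset.Icc k l, ⟪c - xh i, xh i - y i⟫
    + lam * (‖xh k - c‖ + ‖xh l - c‖ - ∑ i ∈ Finset.Icc k (l - 1), ‖xh i - xh (i + 1)‖)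
      with hA
  set B : ℝ := ∑ i ∈ Finset.Icc k l, ‖c - xh i‖ ^ 2 with hB
  have hsub : Finset.Icc k l ⊆ Finset.Icc 1 m := by
    intro i hi; simp only [Finset.mem_Icc] at hi ⊢; omega
  have hkey : 0 ≤ A := by
    refine nonneg_of_small A B (Finset.sum_nonneg fun i _ => by positivity) (fun s hs0 hs1 => ?_)
    have h := master hopt u s
    -- quadratic part
    have hquad : ∑ i ∈ Finset.Icc 1 m, (2 * s * ⟪u i, xh i - y i⟫ + s ^ 2 * ‖u i‖ ^ 2)
        = s * (2 * ∑ i ∈ Finset.Icc k l, ⟪c - xh i, xh i - y i⟫) + s ^ 2 * B := by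
      have hz : ∀ i ∈ Finset.Icc 1 m, i ∉ Finset.Icc k l →
          (2 * s * ⟪u i, xh i - y i⟫ + s ^ 2 * ‖u i‖ ^ 2) = 0 := by
        intro i _ hi
        simp only [hu, if_neg hi]
        simp
      rw [← Finset.sum_subset hsub hz]
      have : ∀ i ∈ Finset.Icc k l, (2 * s * ⟪u i, xh i - y i⟫ + s ^ 2 * ‖u i‖ ^ 2)
          = 2 * s * ⟪c - xh i, xh i - y i⟫ + s ^ 2 * ‖c - xh i‖ ^ 2 := by
        intro i hi
        simp only [hu, if_pos hi]
      rw [Finset.sum_congr rfl this, Finset.sum_add_distrib, hB, ← Finset.mul_sum,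
        ← Finset.mul_sum]
      ring
    -- a-term
    have hu1 : ‖u 1‖ ≤ ‖xh k - c‖ := by
      simp only [hu]
      split_ifs with h1
      · have hk1 : k = 1 := by simp only [Finset.mem_Icc] at h1; omega
        rw [hk1, norm_sub_rev]
      · simp
    have hum : ‖u m‖ ≤ ‖xh l - c‖ := by
      simp only [hu]
      split_ifs with h1
      · have hlm : l = m := by simp only [Finset.mem_Icc] at h1; omega
        rw [hlm, norm_sub_rev]
      · simp
    have ha : ‖a - (xh 1 + s • u 1)‖ - ‖a - xh 1‖ ≤ s * ‖xh k - c‖ :=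
      le_trans (pert_left _ _ _ _ hs0.le)
        (mul_le_mul_of_nonneg_left hu1 hs0.le)
    have hb : ‖(xh m + s • u m) - b‖ - ‖xh m - b‖ ≤ s * ‖xh l - c‖ :=
      le_trans (pert_right _ _ _ _ hs0.le)
        (mul_le_mul_of_nonneg_left hum hs0.le)
    -- edge sum
    have hsub2 : Finset.Icc k (l - 1) ⊆ Finset.Icc 1 (m - 1) := by
      intro i hi; simp only [Finset.mem_Icc] at hi ⊢; omega
    set D : ℕ → ℝ := fun i =>
      ‖(xh i + s • u i) - (xh (i + 1) + s • u (i + 1))‖ - ‖xh i - xh (i + 1)‖ with hD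
    have hsplit : ∑ i ∈ Finset.Icc 1 (m - 1), D i
        = ∑ i ∈ Finset.Icc 1 (m - 1) \ Finset.Icc k (l - 1), D i
          + ∑ i ∈ Finset.Icc k (l - 1), D i := (Finset.sum_sdiff hsub2).symm
    have hinner : ∑ i ∈ Finset.Icc k (l - 1), D i
        = -(s * ∑ i ∈ Finset.Icc k (l - 1), ‖xh i - xh (i + 1)‖) := by
      rw [Finset.mul_sum, ← Finset.sum_neg_distrib]
      refine Finset.sum_congr rfl fun i hi => ?_
      simp only [Finset.mem_Icc] at hi
      have hi1 : i ∈ Finset.Icc k l := by simp only [Finset.mem_Icc]; omega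
      have hi2 : i + 1 ∈ Finset.Icc k l := by simp only [Finset.mem_Icc]; omega
      simp only [hD, hu, if_pos hi1, if_pos hi2]
      exact pert_edge_exact _ _ _ _ hs0.le hs1
    have houter : ∑ i ∈ Finset.Icc 1 (m - 1) \ Finset.Icc k (l - 1), D i
        ≤ s * (∑ i ∈ Finset.Icc 1 (m - 1), (if i = k - 1 then ‖xh k - c‖ else 0)
          + ∑ i ∈ Finset.Icc 1 (m - 1), (if i = l then ‖xh l - c‖ else 0)) := by
      have hbd : ∀ i ∈ Finset.Icc 1 (m - 1) \ Finset.Icc k (l - 1),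
          D i ≤ s * ((if i = k - 1 then ‖xh k - c‖ else 0) + (if i = l then ‖xh l - c‖ else 0)) := by
        intro i hi
        rw [Finset.mem_sdiff, Finset.mem_Icc, Finset.mem_Icc] at hi
        have htri : D i ≤ s * ‖u i - u (i + 1)‖ := pert_edge _ _ _ _ _ hs0.le
        refine le_trans htri (mul_le_mul_of_nonneg_left ?_ hs0.le)
        by_cases h1 : i ∈ Finset.Icc k l <;> by_cases h2 : i + 1 ∈ Finset.Icc k l
        · exfalso
          simp only [Finset.mem_Icc] at h1 h2
          omega
        · have hil : i = l := by simp only [Finset.mem_Icc] at h1 h2; omega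
          subst hil
          have h9 : (0:ℝ) ≤ if i = k - 1 then ‖xh k - c‖ else 0 := by positivity
          simp only [hu, if_pos h1, if_neg h2, sub_zero, norm_sub_rev c (xh i),
            eq_self_iff_true, if_true]
          linarith
        · have hik : i = k - 1 := by simp only [Finset.mem_Icc] at h1 h2; omega
          subst hik
          have e : k - 1 + 1 = k := by omega
          rw [e] at h2 ⊢
          have h9 : (0:ℝ) ≤ if k - 1 = l then ‖xh l - c‖ else 0 := by positivity
          simp only [hu, if_neg h1, if_pos h2, zero_sub, norm_neg, norm_sub_rev c (xh k),
            eq_self_iff_true, if_true]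
          linarith
        · simp only [hu, if_neg h1, if_neg h2, sub_zero, norm_zero]
          positivity
      refine le_trans (Finset.sum_le_sum hbd) ?_
      have hmono : ∑ i ∈ Finset.Icc 1 (m - 1) \ Finset.Icc k (l - 1),
          s * ((if i = k - 1 then ‖xh k - c‖ else 0) + (if i = l then ‖xh l - c‖ else 0))
          ≤ ∑ i ∈ Finset.Icc 1 (m - 1),
          s * ((if i = k - 1 then ‖xh k - c‖ else 0) + (if i = l then ‖xh l - c‖ else 0)) := by
        refine Finset.sum_le_sum_of_subset_of_nonneg (Finset.sdiff_subset) ?_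
        intro i _ _
        have h7 : (0:ℝ) ≤ if i = k - 1 then ‖xh k - c‖ else 0 := by positivity
        have h8 : (0:ℝ) ≤ if i = l then ‖xh l - c‖ else 0 := by positivity
        positivity
      refine le_trans hmono (le_of_eq ?_)
      rw [← Finset.sum_add_distrib, Finset.mul_sum]
    have hITk : ∑ i ∈ Finset.Icc 1 (m - 1), (if i = k - 1 then ‖xh k - c‖ else 0)
        = if k - 1 ∈ Finset.Icc 1 (m - 1) then ‖xh k - c‖ else 0 :=
      Finset.sum_ite_eq' _ _ _
    have hITl : ∑ i ∈ Finset.Icc 1 (m - 1), (if i = l then ‖xh l - c‖ else 0)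
        = if l ∈ Finset.Icc 1 (m - 1) then ‖xh l - c‖ else 0 :=
      Finset.sum_ite_eq' _ _ _
    set Adiff : ℝ := ‖a - (xh 1 + s • u 1)‖ - ‖a - xh 1‖ with hAdiff
    set Bdiff : ℝ := ‖(xh m + s • u m) - b‖ - ‖xh m - b‖ with hBdiff
    have hleft : Adiff + s * ∑ i ∈ Finset.Icc 1 (m - 1), (if i = k - 1 then ‖xh k - c‖ else 0)
        ≤ s * ‖xh k - c‖ := by
      rcases eq_or_lt_of_le hk with hk1 | hk2
      · have hz : k - 1 ∉ Finset.Icc 1 (m - 1) := by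
          simp only [Finset.mem_Icc]; omega
        rw [hITk, if_neg hz]
        have hb1 : Adiff ≤ s * ‖u 1‖ := pert_left _ _ _ _ hs0.le
        have he1 : ‖u 1‖ = ‖xh k - c‖ := by
          have h1 : (1:ℕ) ∈ Finset.Icc k l := by simp only [Finset.mem_Icc]; omega
          simp only [hu, if_pos h1]
          rw [← hk1]
          exact norm_sub_rev _ _
        rw [he1] at hb1
        simpa using hb1
      · have hu1 : u 1 = 0 := by
          have h1 : (1:ℕ) ∉ Finset.Icc k l := by simp only [Finset.mem_Icc]; omega
          simp only [hu, if_neg h1]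
        have hz : Adiff = 0 := by
          rw [hAdiff, hu1, smul_zero, add_zero, sub_self]
        rw [hz, hITk, zero_add]
        refine mul_le_mul_of_nonneg_left ?_ hs0.le
        split_ifs
        · exact le_refl _
        · positivity
    have hright : Bdiff + s * ∑ i ∈ Finset.Icc 1 (m - 1), (if i = l then ‖xh l - c‖ else 0)
        ≤ s * ‖xh l - c‖ := by
      rcases eq_or_lt_of_le hl with hlm | hlm
      · have hz : l ∉ Finset.Icc 1 (m - 1) := by
          simp only [Finset.mem_Icc]; omega
        rw [hITl, if_neg hz]
        have hb1 : Bdiff ≤ s * ‖u m‖ := pert_right _ _ _ _ hs0.le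
        have he1 : ‖u m‖ = ‖xh l - c‖ := by
          have h1 : m ∈ Finset.Icc k l := by simp only [Finset.mem_Icc]; omega
          simp only [hu, if_pos h1]
          rw [hlm]
          exact norm_sub_rev _ _
        rw [he1] at hb1
        simpa using hb1
      · have hu1 : u m = 0 := by
          have h1 : m ∉ Finset.Icc k l := by simp only [Finset.mem_Icc]; omega
          simp only [hu, if_neg h1]
        have hz : Bdiff = 0 := by
          rw [hBdiff, hu1, smul_zero, add_zero, sub_self]
        rw [hz, hITl, zero_add]
        refine mul_le_mul_of_nonneg_left ?_ hs0.le
        split_ifs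
        · exact le_refl _
        · positivity
    have hlampart : lam * (Adiff + Bdiff + ∑ i ∈ Finset.Icc 1 (m - 1), D i)
        ≤ lam * (s * (‖xh k - c‖ + ‖xh l - c‖
          - ∑ i ∈ Finset.Icc k (l - 1), ‖xh i - xh (i + 1)‖)) := by
      refine mul_le_mul_of_nonneg_left ?_ hlam.le
      rw [hsplit, hinner]
      have hr : s * (‖xh k - c‖ + ‖xh l - c‖
          - ∑ i ∈ Finset.Icc k (l - 1), ‖xh i - xh (i + 1)‖)
          = s * ‖xh k - c‖ + s * ‖xh l - c‖
            - s * ∑ i ∈ Finset.Icc k (l - 1), ‖xh i - xh (i + 1)‖ := by ring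
      have hr2 : s * (∑ i ∈ Finset.Icc 1 (m - 1), (if i = k - 1 then ‖xh k - c‖ else 0)
          + ∑ i ∈ Finset.Icc 1 (m - 1), (if i = l then ‖xh l - c‖ else 0))
          = s * ∑ i ∈ Finset.Icc 1 (m - 1), (if i = k - 1 then ‖xh k - c‖ else 0)
            + s * ∑ i ∈ Finset.Icc 1 (m - 1), (if i = l then ‖xh l - c‖ else 0) := by ring
      rw [hr]
      rw [hr2] at houter
      linarith [houter, hleft, hright]
    rw [hquad] at h
    have hfin : 0 ≤ s * (2 * ∑ i ∈ Finset.Icc k l, ⟪c - xh i, xh i - y i⟫) + s ^ 2 * B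
        + lam * (s * (‖xh k - c‖ + ‖xh l - c‖
          - ∑ i ∈ Finset.Icc k (l - 1), ‖xh i - xh (i + 1)‖)) := by
      linarith [h, hlampart]
    have hring : s * A + s ^ 2 * B
        = s * (2 * ∑ i ∈ Finset.Icc k l, ⟪c - xh i, xh i - y i⟫) + s ^ 2 * B
          + lam * (s * (‖xh k - c‖ + ‖xh l - c‖
            - ∑ i ∈ Finset.Icc k (l - 1), ‖xh i - xh (i + 1)‖)) := by
      rw [hA]; ring
    rw [hring]
    exact hfin
  have hswap : ∑ i ∈ Finset.Icc k l, ⟪c - xh i, xh i - y i⟫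
      = -∑ i ∈ Finset.Icc k l, ⟪xh i - c, xh i - y i⟫ := by
    rw [← Finset.sum_neg_distrib]
    refine Finset.sum_congr rfl fun i _ => ?_
    rw [← inner_neg_left, neg_sub]
  rw [hA, hswap] at hkey
  linarith

/-- Moving `xh t` toward `xh (t+1)` : first-order optimality. -/
lemma neighborA (hlam : 0 < lam) (t : ℕ) (ht1 : 1 ≤ t) (htm : t + 1 ≤ m)
    (hopt : ∀ z : ℕ → F, En m y a b lam xh ≤ En m y a b lam z) :
    0 ≤ ⟪xh (t + 1) - xh t, xh t - y t⟫ := by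
  set v : F := xh (t + 1) - xh t with hv
  set u : ℕ → F := fun i => if i = t then v else 0 with hu
  have htmem : t ∈ Finset.Icc 1 m := by simp only [Finset.mem_Icc]; omega
  have htedge : t ∈ Finset.Icc 1 (m - 1) := by simp only [Finset.mem_Icc]; omega
  refine nonneg_of_small _ (‖v‖ ^ 2) (by positivity) (fun s hs0 hs1 => ?_)
  have h := master hopt u s
  have hquad : ∑ i ∈ Finset.Icc 1 m, (2 * s * ⟪u i, xh i - y i⟫ + s ^ 2 * ‖u i‖ ^ 2)
      = s * ⟪v, xh t - y t⟫ * 2 + s ^ 2 * ‖v‖ ^ 2 := by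
    rw [Finset.sum_eq_single_of_mem t htmem (fun i _ hne => by simp [hu, hne])]
    simp only [hu, if_pos rfl]
    ring
  have ha : ‖a - (xh 1 + s • u 1)‖ - ‖a - xh 1‖ ≤ s * (if t = 1 then ‖v‖ else 0) := by
    by_cases h1 : t = 1
    · rw [if_pos h1]
      refine le_trans (pert_left _ _ _ _ hs0.le) (mul_le_mul_of_nonneg_left ?_ hs0.le)
      simp only [hu]
      split_ifs <;> simp
    · have : u 1 = 0 := by simp only [hu]; rw [if_neg (by omega)]
      rw [this, if_neg h1, smul_zero, add_zero, sub_self, mul_zero]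
  have hb : ‖(xh m + s • u m) - b‖ - ‖xh m - b‖ = 0 := by
    have : u m = 0 := by simp only [hu]; rw [if_neg (by omega)]
    rw [this, smul_zero, add_zero, sub_self]
  set D : ℕ → ℝ := fun i =>
    ‖(xh i + s • u i) - (xh (i + 1) + s • u (i + 1))‖ - ‖xh i - xh (i + 1)‖ with hD
  have hDt : D t = -(s * ‖xh t - xh (t + 1)‖) := by
    have h1 : u t = xh (t + 1) - xh t := by simp only [hu, if_pos rfl, hv]
    have h2 : u (t + 1) = 0 := by simp only [hu]; rw [if_neg (by omega)]
    have h3 : xh (t + 1) + s • u (t + 1) = xh (t + 1) + s • (xh (t + 1) - xh (t + 1)) := by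
      rw [h2, sub_self]
    simp only [hD, h1, h3]
    exact pert_edge_exact (xh t) (xh (t + 1)) (xh (t + 1)) s hs0.le hs1
  have hsplit : ∑ i ∈ Finset.Icc 1 (m - 1), D i
      = ∑ i ∈ Finset.Icc 1 (m - 1) \ {t}, D i + D t := by
    rw [Finset.sum_eq_sum_sdiff_singleton_add htedge]
  have houter : ∑ i ∈ Finset.Icc 1 (m - 1) \ {t}, D i
      ≤ ∑ i ∈ Finset.Icc 1 (m - 1), (if i = t - 1 then s * ‖v‖ else 0) := by
    refine le_trans (Finset.sum_le_sum (g := fun i => if i = t - 1 then s * ‖v‖ else 0) ?_)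
      (Finset.sum_le_sum_of_subset_of_nonneg (Finset.sdiff_subset) ?_)
    · intro i hi
      rw [Finset.mem_sdiff, Finset.mem_singleton] at hi
      obtain ⟨hi1, hi2⟩ := hi
      by_cases h4 : i = t - 1
      · simp only [if_pos h4]
        have h5 : u i = 0 := by simp only [hu]; rw [if_neg hi2]
        have h6 : u (i + 1) = v := by
          simp only [hu]
          rw [if_pos (by simp only [Finset.mem_Icc] at hi1; omega)]
        refine le_trans (pert_edge _ _ _ _ _ hs0.le) ?_
        rw [h5, h6, zero_sub, norm_neg]
      · simp only [if_neg h4]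
        have h5 : u i = 0 := by simp only [hu]; rw [if_neg hi2]
        have h6 : u (i + 1) = 0 := by
          simp only [hu]
          rw [if_neg (by simp only [Finset.mem_Icc] at hi1; omega)]
        simp only [hD, h5, h6, smul_zero, add_zero, sub_self, le_refl]
    · intro i _ _
      positivity
  have houter2 : ∑ i ∈ Finset.Icc 1 (m - 1), (if i = t - 1 then s * ‖v‖ else 0)
      ≤ if t = 1 then 0 else s * ‖v‖ := by
    rw [Finset.sum_ite_eq' _ _ (fun _ => s * ‖v‖)]
    by_cases h7 : t = 1
    · rw [if_pos h7]
      have : t - 1 ∉ Finset.Icc 1 (m - 1) := by simp only [Finset.mem_Icc]; omega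
      rw [if_neg this]
    · rw [if_neg h7]
      split_ifs
      · exact le_refl _
      · positivity
  have hedgecost : ∑ i ∈ Finset.Icc 1 (m - 1), D i
      ≤ (if t = 1 then 0 else s * ‖v‖) - s * ‖xh t - xh (t + 1)‖ := by
    rw [hsplit, hDt]
    linarith [le_trans houter houter2]
  have hnv : ‖xh t - xh (t + 1)‖ = ‖v‖ := by rw [hv, norm_sub_rev]
  have hcost : (‖a - (xh 1 + s • u 1)‖ - ‖a - xh 1‖)
      + (‖(xh m + s • u m) - b‖ - ‖xh m - b‖)
      + ∑ i ∈ Finset.Icc 1 (m - 1), D i ≤ 0 := by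
    rw [hnv] at hedgecost
    by_cases h7 : t = 1
    · rw [if_pos h7] at ha hedgecost
      rw [hb]
      linarith
    · rw [if_neg h7] at ha hedgecost
      rw [hb]
      linarith
  have hlamcost : lam * ((‖a - (xh 1 + s • u 1)‖ - ‖a - xh 1‖)
      + (‖(xh m + s • u m) - b‖ - ‖xh m - b‖)
      + ∑ i ∈ Finset.Icc 1 (m - 1), D i) ≤ 0 :=
    mul_nonpos_of_nonneg_of_nonpos hlam.le hcost
  rw [hquad] at h
  nlinarith [h, hlamcost]

/-- Moving `xh (t+1)` toward `xh t` : first-order optimality. -/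
lemma neighborB (hlam : 0 < lam) (t : ℕ) (ht1 : 1 ≤ t) (htm : t + 1 ≤ m)
    (hopt : ∀ z : ℕ → F, En m y a b lam xh ≤ En m y a b lam z) :
    0 ≤ ⟪xh t - xh (t + 1), xh (t + 1) - y (t + 1)⟫ := by
  set v : F := xh t - xh (t + 1) with hv
  set u : ℕ → F := fun i => if i = t + 1 then v else 0 with hu
  have htmem : t + 1 ∈ Finset.Icc 1 m := by simp only [Finset.mem_Icc]; omega
  have htedge : t ∈ Finset.Icc 1 (m - 1) := by simp only [Finset.mem_Icc]; omega
  refine nonneg_of_small _ (‖v‖ ^ 2) (by positivity) (fun s hs0 hs1 => ?_)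
  have h := master hopt u s
  have hquad : ∑ i ∈ Finset.Icc 1 m, (2 * s * ⟪u i, xh i - y i⟫ + s ^ 2 * ‖u i‖ ^ 2)
      = s * ⟪v, xh (t + 1) - y (t + 1)⟫ * 2 + s ^ 2 * ‖v‖ ^ 2 := by
    rw [Finset.sum_eq_single_of_mem (t + 1) htmem (fun i _ hne => by simp [hu, hne])]
    simp only [hu, if_pos rfl]
    ring
  have ha : ‖a - (xh 1 + s • u 1)‖ - ‖a - xh 1‖ = 0 := by
    have : u 1 = 0 := by simp only [hu]; rw [if_neg (by omega)]
    rw [this, smul_zero, add_zero, sub_self]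
  have hb : ‖(xh m + s • u m) - b‖ - ‖xh m - b‖ ≤ s * (if t + 1 = m then ‖v‖ else 0) := by
    by_cases h1 : t + 1 = m
    · rw [if_pos h1]
      refine le_trans (pert_right _ _ _ _ hs0.le) (mul_le_mul_of_nonneg_left ?_ hs0.le)
      simp only [hu]
      split_ifs <;> simp
    · have : u m = 0 := by simp only [hu]; rw [if_neg (by omega)]
      rw [this, if_neg h1, smul_zero, add_zero, sub_self, mul_zero]
  set D : ℕ → ℝ := fun i =>
    ‖(xh i + s • u i) - (xh (i + 1) + s • u (i + 1))‖ - ‖xh i - xh (i + 1)‖ with hD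
  have hDt : D t = -(s * ‖xh t - xh (t + 1)‖) := by
    have h1 : u (t + 1) = xh t - xh (t + 1) := by simp only [hu, if_pos rfl, hv]
    have h2 : u t = 0 := by simp only [hu]; rw [if_neg (by omega)]
    have h3 : xh t + s • u t = xh t + s • (xh t - xh t) := by
      rw [h2, sub_self]
    simp only [hD, h1, h3]
    exact pert_edge_exact (xh t) (xh (t + 1)) (xh t) s hs0.le hs1
  have hsplit : ∑ i ∈ Finset.Icc 1 (m - 1), D i
      = ∑ i ∈ Finset.Icc 1 (m - 1) \ {t}, D i + D t := by
    rw [Finset.sum_eq_sum_sdiff_singleton_add htedge]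
  have houter : ∑ i ∈ Finset.Icc 1 (m - 1) \ {t}, D i
      ≤ ∑ i ∈ Finset.Icc 1 (m - 1), (if i = t + 1 then s * ‖v‖ else 0) := by
    refine le_trans (Finset.sum_le_sum (g := fun i => if i = t + 1 then s * ‖v‖ else 0) ?_)
      (Finset.sum_le_sum_of_subset_of_nonneg (Finset.sdiff_subset) ?_)
    · intro i hi
      rw [Finset.mem_sdiff, Finset.mem_singleton] at hi
      obtain ⟨hi1, hi2⟩ := hi
      by_cases h4 : i = t + 1
      · simp only [if_pos h4]
        have h5 : u i = v := by simp only [hu]; rw [if_pos h4]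
        have h6 : u (i + 1) = 0 := by
          simp only [hu]
          rw [if_neg (by omega)]
        refine le_trans (pert_edge _ _ _ _ _ hs0.le) ?_
        rw [h5, h6, sub_zero]
      · simp only [if_neg h4]
        have h5 : u i = 0 := by simp only [hu]; rw [if_neg (by omega)]
        have h6 : u (i + 1) = 0 := by
          simp only [hu]
          rw [if_neg (by omega)]
        simp only [hD, h5, h6, smul_zero, add_zero, sub_self, le_refl]
    · intro i _ _
      positivity
  have houter2 : ∑ i ∈ Finset.Icc 1 (m - 1), (if i = t + 1 then s * ‖v‖ else 0)
      ≤ if t + 1 = m then 0 else s * ‖v‖ := by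
    rw [Finset.sum_ite_eq' _ _ (fun _ => s * ‖v‖)]
    by_cases h7 : t + 1 = m
    · rw [if_pos h7]
      have : t + 1 ∉ Finset.Icc 1 (m - 1) := by simp only [Finset.mem_Icc]; omega
      rw [if_neg this]
    · rw [if_neg h7]
      split_ifs
      · exact le_refl _
      · positivity
  have hedgecost : ∑ i ∈ Finset.Icc 1 (m - 1), D i
      ≤ (if t + 1 = m then 0 else s * ‖v‖) - s * ‖xh t - xh (t + 1)‖ := by
    rw [hsplit, hDt]
    linarith [le_trans houter houter2]
  have hnv : ‖xh t - xh (t + 1)‖ = ‖v‖ := by rw [hv]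
  have hcost : (‖a - (xh 1 + s • u 1)‖ - ‖a - xh 1‖)
      + (‖(xh m + s • u m) - b‖ - ‖xh m - b‖)
      + ∑ i ∈ Finset.Icc 1 (m - 1), D i ≤ 0 := by
    rw [hnv] at hedgecost
    by_cases h7 : t + 1 = m
    · rw [if_pos h7] at hb hedgecost
      rw [ha]
      linarith
    · rw [if_neg h7] at hb hedgecost
      rw [ha]
      linarith
  have hlamcost : lam * ((‖a - (xh 1 + s • u 1)‖ - ‖a - xh 1‖)
      + (‖(xh m + s • u m) - b‖ - ‖xh m - b‖)
      + ∑ i ∈ Finset.Icc 1 (m - 1), D i) ≤ 0 :=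
    mul_nonpos_of_nonneg_of_nonpos hlam.le hcost
  rw [hquad] at h
  nlinarith [h, hlamcost]

/-- Rise bound for squared norms along the chain. -/
lemma sq_rise (hlam : 0 < lam) {My : ℝ} (t : ℕ) (ht1 : 1 ≤ t) (htm : t + 1 ≤ m)
    (hyb : ‖y (t + 1)‖ ≤ My)
    (hopt : ∀ z : ℕ → F, En m y a b lam xh ≤ En m y a b lam z) :
    ‖xh (t + 1)‖ ^ 2 - ‖xh t‖ ^ 2 ≤ 2 * My * ‖xh t - xh (t + 1)‖ := by
  have h := neighborB hlam t ht1 htm hopt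
  set d : F := xh t - xh (t + 1) with hd
  have h1 : ⟪d, xh (t + 1)⟫ ≥ ⟪d, y (t + 1)⟫ := by
    have : ⟪d, xh (t + 1) - y (t + 1)⟫ = ⟪d, xh (t + 1)⟫ - ⟪d, y (t + 1)⟫ := inner_sub_right _ _ _
    linarith [h, this.symm.le, this.le]
  have h2 : ⟪d, y (t + 1)⟫ ≥ -(‖d‖ * My) := by
    have := real_inner_le_norm d (y (t + 1))
    have h3 := real_inner_le_norm (-d) (y (t + 1))
    rw [inner_neg_left, norm_neg] at h3
    nlinarith [norm_nonneg d, hyb, norm_nonneg (y (t+1))]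
  have h4 : ‖xh t‖ ^ 2 = ‖xh (t + 1)‖ ^ 2 + 2 * ⟪xh (t + 1), d⟫ + ‖d‖ ^ 2 := by
    have : xh t = xh (t + 1) + d := by rw [hd]; abel
    rw [this, norm_add_sq_real]
  rw [real_inner_comm] at h4
  nlinarith [sq_nonneg (‖d‖), h1, h2, h4]

/-- Fall bound for squared norms along the chain. -/
lemma sq_fall (hlam : 0 < lam) {My : ℝ} (t : ℕ) (ht1 : 1 ≤ t) (htm : t + 1 ≤ m)
    (hyb : ‖y t‖ ≤ My)
    (hopt : ∀ z : ℕ → F, En m y a b lam xh ≤ En m y a b lam z) :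
    ‖xh t‖ ^ 2 - ‖xh (t + 1)‖ ^ 2 ≤ 2 * My * ‖xh t - xh (t + 1)‖ := by
  have h := neighborA hlam t ht1 htm hopt
  set d : F := xh (t + 1) - xh t with hd
  have h1 : ⟪d, xh t⟫ ≥ ⟪d, y t⟫ := by
    have : ⟪d, xh t - y t⟫ = ⟪d, xh t⟫ - ⟪d, y t⟫ := inner_sub_right _ _ _
    linarith [h, this.le]
  have h2 : ⟪d, y t⟫ ≥ -(‖d‖ * My) := by
    have h3 := real_inner_le_norm (-d) (y t)
    rw [inner_neg_left, norm_neg] at h3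
    nlinarith [norm_nonneg d, hyb, norm_nonneg (y t)]
  have h4 : ‖xh (t + 1)‖ ^ 2 = ‖xh t‖ ^ 2 + 2 * ⟪xh t, d⟫ + ‖d‖ ^ 2 := by
    have : xh (t + 1) = xh t + d := by rw [hd]; abel
    rw [this, norm_add_sq_real]
  rw [real_inner_comm] at h4
  have h5 : ‖xh t - xh (t + 1)‖ = ‖d‖ := by rw [hd, norm_sub_rev]
  rw [h5]
  nlinarith [sq_nonneg (‖d‖), h1, h2, h4]

/-- Telescoped rise bound. -/
lemma sq_path_up (hlam : 0 < lam) {My : ℝ} (t j : ℕ) (ht1 : 1 ≤ t) (htj : t ≤ j) (hj : j ≤ m)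
    (hyb : ∀ i, 1 ≤ i → i ≤ m → ‖y i‖ ≤ My)
    (hopt : ∀ z : ℕ → F, En m y a b lam xh ≤ En m y a b lam z) :
    ‖xh j‖ ^ 2 - ‖xh t‖ ^ 2 ≤ 2 * My * ∑ i ∈ Finset.Icc t (j - 1), ‖xh i - xh (i + 1)‖ := by
  induction j, htj using Nat.le_induction with
  | base =>
    have : Finset.Icc t (t - 1) = ∅ := by
      rw [Finset.Icc_eq_empty_iff]; omega
    rw [this, Finset.sum_empty]
    simp
  | succ j hj2 ih =>
    have hj1 : j ≤ m := by omega
    have ihv := ih hj1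
    have hstep := sq_rise hlam j (by omega) (by omega) (hyb (j + 1) (by omega) (by omega)) hopt
    have hsum : ∑ i ∈ Finset.Icc t (j + 1 - 1), ‖xh i - xh (i + 1)‖
        = ∑ i ∈ Finset.Icc t (j - 1), ‖xh i - xh (i + 1)‖ + ‖xh j - xh (j + 1)‖ := by
      have e1 : j + 1 - 1 = j := by omega
      have e2 : j - 1 + 1 = j := by omega
      rw [e1, ← e2, Finset.sum_Icc_succ_top (by omega), e2]
    rw [hsum]
    linarith

/-- Telescoped fall bound. -/
lemma sq_path_down (hlam : 0 < lam) {My : ℝ} (j t : ℕ) (hj1 : 1 ≤ j) (hjt : j ≤ t) (ht : t ≤ m)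
    (hyb : ∀ i, 1 ≤ i → i ≤ m → ‖y i‖ ≤ My)
    (hopt : ∀ z : ℕ → F, En m y a b lam xh ≤ En m y a b lam z) :
    ‖xh j‖ ^ 2 - ‖xh t‖ ^ 2 ≤ 2 * My * ∑ i ∈ Finset.Icc j (t - 1), ‖xh i - xh (i + 1)‖ := by
  induction t, hjt using Nat.le_induction with
  | base =>
    have : Finset.Icc j (j - 1) = ∅ := by
      rw [Finset.Icc_eq_empty_iff]; omega
    rw [this, Finset.sum_empty]
    simp
  | succ t ht2 ih =>
    have ht1 : t ≤ m := by omega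
    have ihv := ih ht1
    have hstep := sq_fall hlam t (by omega) (by omega) (hyb t (by omega) (by omega)) hopt
    have hsum : ∑ i ∈ Finset.Icc j (t + 1 - 1), ‖xh i - xh (i + 1)‖
        = ∑ i ∈ Finset.Icc j (t - 1), ‖xh i - xh (i + 1)‖ + ‖xh t - xh (t + 1)‖ := by
      have e1 : t + 1 - 1 = t := by omega
      have e2 : t - 1 + 1 = t := by omega
      rw [e1, ← e2, Finset.sum_Icc_succ_top (by omega), e2]
    rw [hsum]
    linarith

/-- Chain/triangle bound. -/
lemma chain_bound (k u : ℕ) (hk : 1 ≤ k) (hku : k ≤ u) :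
    ‖xh k - xh u‖ ≤ ∑ i ∈ Finset.Icc k (u - 1), ‖xh i - xh (i + 1)‖ := by
  induction u, hku using Nat.le_induction with
  | base =>
    have : Finset.Icc k (k - 1) = ∅ := by rw [Finset.Icc_eq_empty_iff]; omega
    rw [this, Finset.sum_empty, sub_self, norm_zero]
  | succ u hu2 ih =>
    have hsum : ∑ i ∈ Finset.Icc k (u + 1 - 1), ‖xh i - xh (i + 1)‖
        = ∑ i ∈ Finset.Icc k (u - 1), ‖xh i - xh (i + 1)‖ + ‖xh u - xh (u + 1)‖ := by
      have e1 : u + 1 - 1 = u := by omega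
      have e2 : u - 1 + 1 = u := by omega
      rw [e1, ← e2, Finset.sum_Icc_succ_top (by omega), e2]
    rw [hsum]
    have htr : ‖xh k - xh (u + 1)‖ ≤ ‖xh k - xh u‖ + ‖xh u - xh (u + 1)‖ := by
      have : xh k - xh (u + 1) = (xh k - xh u) + (xh u - xh (u + 1)) := by abel
      rw [this]; exact norm_add_le _ _
    linarith

lemma mean_zero (k l : ℕ) (hkl : k ≤ l) :
    ∑ i ∈ Finset.Icc k l,
      (xh i - (((Finset.Icc k l).card : ℝ))⁻¹ • ∑ j ∈ Finset.Icc k l, xh j) = 0 := by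
  have hcard : (Finset.Icc k l).card = l + 1 - k := Nat.card_Icc k l
  have hpos : 0 < (Finset.Icc k l).card := by rw [hcard]; omega
  have hN : ((Finset.Icc k l).card : ℝ) ≠ 0 := by positivity
  rw [Finset.sum_sub_distrib, Finset.sum_const, sub_eq_zero]
  rw [← Nat.cast_smul_eq_nsmul ℝ, smul_smul, mul_inv_cancel₀ hN, one_smul]

lemma inner_mean_lb {My : ℝ} (k l : ℕ)
    (hyb : ∀ i ∈ Finset.Icc k l, ‖y i‖ ≤ My) (c : F)
    (hc : ∑ i ∈ Finset.Icc k l, (xh i - c) = 0) :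
    ∑ i ∈ Finset.Icc k l, (‖xh i - c‖ ^ 2 - My * ‖xh i - c‖)
      ≤ ∑ i ∈ Finset.Icc k l, ⟪xh i - c, xh i - y i⟫ := by
  have hdec : ∀ i, ⟪xh i - c, xh i - y i⟫
      = ‖xh i - c‖ ^ 2 + ⟪xh i - c, c⟫ - ⟪xh i - c, y i⟫ := by
    intro i
    have : xh i - y i = (xh i - c) + (c - y i) := by abel
    rw [this, inner_add_right, real_inner_self_eq_norm_sq, inner_sub_right]
    ring
  have hsum : ∑ i ∈ Finset.Icc k l, ⟪xh i - c, xh i - y i⟫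
      = ∑ i ∈ Finset.Icc k l, ‖xh i - c‖ ^ 2 + ⟪∑ i ∈ Finset.Icc k l, (xh i - c), c⟫
        - ∑ i ∈ Finset.Icc k l, ⟪xh i - c, y i⟫ := by
    rw [sum_inner]
    rw [Finset.sum_congr rfl fun i _ => hdec i]
    rw [Finset.sum_sub_distrib, Finset.sum_add_distrib]
  rw [hsum, hc, inner_zero_left, add_zero]
  have hterm : ∀ i ∈ Finset.Icc k l, ⟪xh i - c, y i⟫ ≤ My * ‖xh i - c‖ := by
    intro i hi
    have h1 := real_inner_le_norm (xh i - c) (y i)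
    have h2 := hyb i hi
    nlinarith [norm_nonneg (xh i - c), norm_nonneg (y i)]
  have := Finset.sum_le_sum hterm
  rw [Finset.sum_sub_distrib]
  have heq : ∑ i ∈ Finset.Icc k l, My * ‖xh i - c‖
      = My * ∑ i ∈ Finset.Icc k l, ‖xh i - c‖ := by rw [Finset.mul_sum]
  calc ∑ i ∈ Finset.Icc k l, ‖xh i - c‖ ^ 2 - ∑ i ∈ Finset.Icc k l, My * ‖xh i - c‖
      ≤ ∑ i ∈ Finset.Icc k l, ‖xh i - c‖ ^ 2 - ∑ i ∈ Finset.Icc k l, ⟪xh i - c, y i⟫ := by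
        linarith
    _ = _ := by ring

lemma mean_trick (k l : ℕ) (hk : 1 ≤ k) (hkl : k ≤ l) :
    ‖xh k - (((Finset.Icc k l).card : ℝ))⁻¹ • ∑ j ∈ Finset.Icc k l, xh j‖
      + ‖xh l - (((Finset.Icc k l).card : ℝ))⁻¹ • ∑ j ∈ Finset.Icc k l, xh j‖
      ≤ ∑ i ∈ Finset.Icc k (l - 1), ‖xh i - xh (i + 1)‖ := by
  set S : F := ∑ j ∈ Finset.Icc k l, xh j with hS
  have hcard : (Finset.Icc k l).card = l + 1 - k := Nat.card_Icc k l
  have hposn : 0 < (Finset.Icc k l).card := by rw [hcard]; omega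
  set N : ℝ := ((Finset.Icc k l).card : ℝ) with hNdef
  have hN : 0 < N := by rw [hNdef]; exact_mod_cast hposn
  set c : F := N⁻¹ • S with hc
  have hfold : ∀ w : F, N • (w - c) = ∑ u ∈ Finset.Icc k l, (w - xh u) := by
    intro w
    rw [Finset.sum_sub_distrib, Finset.sum_const, smul_sub, hc, smul_smul,
      mul_inv_cancel₀ hN.ne', one_smul, ← Nat.cast_smul_eq_nsmul ℝ, hNdef, hS]
  have hnorm : ∀ w : F, N * ‖w - c‖ ≤ ∑ u ∈ Finset.Icc k l, ‖w - xh u‖ := by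
    intro w
    have h1 : ‖N • (w - c)‖ = N * ‖w - c‖ := by
      rw [norm_smul, Real.norm_eq_abs, abs_of_pos hN]
    rw [← h1, hfold w]
    exact norm_sum_le _ _
  set V : ℝ := ∑ i ∈ Finset.Icc k (l - 1), ‖xh i - xh (i + 1)‖ with hV
  have hVsplit : ∀ u ∈ Finset.Icc k l,
      ∑ i ∈ Finset.Icc k (u - 1), ‖xh i - xh (i + 1)‖
        + ∑ i ∈ Finset.Icc u (l - 1), ‖xh i - xh (i + 1)‖ = V := by
    intro u hu
    simp only [Finset.mem_Icc] at hu
    have e1 : Finset.Icc k (u - 1) = Finset.Ico k u := by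
      rw [← Finset.Ico_add_one_right_eq_Icc]
      congr 1
      omega
    have e2 : Finset.Icc u (l - 1) = Finset.Ico u l := by
      rw [← Finset.Ico_add_one_right_eq_Icc]
      congr 1
      omega
    have e3 : Finset.Icc k (l - 1) = Finset.Ico k l := by
      rw [← Finset.Ico_add_one_right_eq_Icc]
      congr 1
      omega
    rw [hV, e1, e2, e3]
    exact Finset.sum_Ico_consecutive _ hu.1 hu.2
  have hck : N * ‖xh k - c‖ ≤ ∑ u ∈ Finset.Icc k l, ∑ i ∈ Finset.Icc k (u - 1), ‖xh i - xh (i + 1)‖ := by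
    refine le_trans (hnorm (xh k)) (Finset.sum_le_sum fun u hu => ?_)
    simp only [Finset.mem_Icc] at hu
    exact chain_bound k u hk hu.1
  have hcl : N * ‖xh l - c‖ ≤ ∑ u ∈ Finset.Icc k l, ∑ i ∈ Finset.Icc u (l - 1), ‖xh i - xh (i + 1)‖ := by
    have h2 : ∀ u ∈ Finset.Icc k l, ‖xh l - xh u‖ ≤ ∑ i ∈ Finset.Icc u (l - 1), ‖xh i - xh (i + 1)‖ := by
      intro u hu
      simp only [Finset.mem_Icc] at hu
      rw [norm_sub_rev]
      exact chain_bound u l (by omega) hu.2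
    exact le_trans (hnorm (xh l)) (Finset.sum_le_sum h2)
  have htot : N * ‖xh k - c‖ + N * ‖xh l - c‖ ≤ N * V := by
    have h3 : ∑ u ∈ Finset.Icc k l, ∑ i ∈ Finset.Icc k (u - 1), ‖xh i - xh (i + 1)‖
        + ∑ u ∈ Finset.Icc k l, ∑ i ∈ Finset.Icc u (l - 1), ‖xh i - xh (i + 1)‖
        = ∑ u ∈ Finset.Icc k l, V := by
      rw [← Finset.sum_add_distrib]
      exact Finset.sum_congr rfl hVsplit
    have h4 : ∑ _u ∈ Finset.Icc k l, V = N * V := by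
      rw [Finset.sum_const, ← Nat.cast_smul_eq_nsmul ℝ, hNdef, smul_eq_mul]
    linarith [hck, hcl]
  have hfin : ‖xh k - c‖ + ‖xh l - c‖ ≤ V := by
    nlinarith [htot, hN]
  exact hfin

lemma vbound (hlam : 0 < lam) {My : ℝ} (k l : ℕ) (hk : 1 ≤ k) (hkl : k ≤ l) (hl : l ≤ m)
    (hyb : ∀ i ∈ Finset.Icc k l, ‖y i‖ ≤ My)
    (hopt : ∀ z : ℕ → F, En m y a b lam xh ≤ En m y a b lam z) :
    ∑ i ∈ Finset.Icc k (l - 1), ‖xh i - xh (i + 1)‖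
      ≤ ‖xh k - (((Finset.Icc k l).card : ℝ))⁻¹ • ∑ j ∈ Finset.Icc k l, xh j‖
        + ‖xh l - (((Finset.Icc k l).card : ℝ))⁻¹ • ∑ j ∈ Finset.Icc k l, xh j‖
        + ((Finset.Icc k l).card : ℝ) * My ^ 2 / (2 * lam) := by
  set c : F := (((Finset.Icc k l).card : ℝ))⁻¹ • ∑ j ∈ Finset.Icc k l, xh j with hc
  have hcon := contract hlam k l hk hkl hl c hopt
  have hlb := inner_mean_lb k l hyb c (mean_zero k l hkl)
  have hquart : ∀ i ∈ Finset.Icc k l, -(My ^ 2 / 4) ≤ ‖xh i - c‖ ^ 2 - My * ‖xh i - c‖ := by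
    intro i _
    nlinarith [sq_nonneg (‖xh i - c‖ - My / 2)]
  have hsum : -(((Finset.Icc k l).card : ℝ) * (My ^ 2 / 4))
      ≤ ∑ i ∈ Finset.Icc k l, (‖xh i - c‖ ^ 2 - My * ‖xh i - c‖) := by
    calc -(((Finset.Icc k l).card : ℝ) * (My ^ 2 / 4))
        = ∑ _i ∈ Finset.Icc k l, -(My ^ 2 / 4) := by
          rw [Finset.sum_const, ← Nat.cast_smul_eq_nsmul ℝ, smul_eq_mul]
          ring
      _ ≤ _ := Finset.sum_le_sum hquart
  have h5 : lam * ∑ i ∈ Finset.Icc k (l - 1), ‖xh i - xh (i + 1)‖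
      ≤ lam * (‖xh k - c‖ + ‖xh l - c‖) + ((Finset.Icc k l).card : ℝ) * (My ^ 2 / 2) := by
    nlinarith [hcon, hlb, hsum]
  have h7 : lam * (‖xh k - c‖ + ‖xh l - c‖ + ((Finset.Icc k l).card : ℝ) * My ^ 2 / (2 * lam))
      = lam * (‖xh k - c‖ + ‖xh l - c‖) + ((Finset.Icc k l).card : ℝ) * (My ^ 2 / 2) := by
    field_simp
  have hgoal : lam * (∑ i ∈ Finset.Icc k (l - 1), ‖xh i - xh (i + 1)‖)
      ≤ lam * (‖xh k - c‖ + ‖xh l - c‖ + ((Finset.Icc k l).card : ℝ) * My ^ 2 / (2 * lam)) := by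
    rw [h7]
    linarith [h5]
  exact (mul_le_mul_iff_right₀ hlam).mp hgoal

lemma lowpoint (hlam : 0 < lam) {My : ℝ} (hM : 0 < My) (k l : ℕ)
    (hk : 1 ≤ k) (hkl : k ≤ l) (hl : l ≤ m)
    (hyb : ∀ i ∈ Finset.Icc k l, ‖y i‖ ≤ My)
    (hopt : ∀ z : ℕ → F, En m y a b lam xh ≤ En m y a b lam z) :
    ∃ t ∈ Finset.Icc k l,
      ‖xh t - (((Finset.Icc k l).card : ℝ))⁻¹ • ∑ j ∈ Finset.Icc k l, xh j‖ ≤ My := by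
  have hmt := mean_trick (xh := xh) k l hk hkl
  set c : F := (((Finset.Icc k l).card : ℝ))⁻¹ • ∑ j ∈ Finset.Icc k l, xh j with hc
  have hcon := contract hlam k l hk hkl hl c hopt
  have hlb := inner_mean_lb k l hyb c (mean_zero k l hkl)
  have hneg : ∑ i ∈ Finset.Icc k l, (‖xh i - c‖ ^ 2 - My * ‖xh i - c‖) ≤ 0 := by
    nlinarith [hcon, hlb, hmt, hlam]
  by_contra hcontra
  push_neg at hcontra
  have hpos : 0 < ∑ i ∈ Finset.Icc k l, (‖xh i - c‖ ^ 2 - My * ‖xh i - c‖) := by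
    refine Finset.sum_pos (fun i hi => ?_) ⟨k, by simp only [Finset.mem_Icc]; omega⟩
    have h6 := hcontra i (by simpa using hi)
    nlinarith [h6, hM]
  linarith

/-- Variation bound with center 0. -/
lemma vbound0 (hlam : 0 < lam) {My : ℝ} (k l : ℕ) (hk : 1 ≤ k) (hkl : k ≤ l) (hl : l ≤ m)
    (hyb : ∀ i ∈ Finset.Icc k l, ‖y i‖ ≤ My)
    (hopt : ∀ z : ℕ → F, En m y a b lam xh ≤ En m y a b lam z) :
    ∑ i ∈ Finset.Icc k (l - 1), ‖xh i - xh (i + 1)‖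
      ≤ ‖xh k‖ + ‖xh l‖ + ((Finset.Icc k l).card : ℝ) * My ^ 2 / (2 * lam) := by
  have hcon := contract hlam k l hk hkl hl 0 hopt
  simp only [sub_zero] at hcon
  have hlb : ∀ i ∈ Finset.Icc k l, -(My ^ 2 / 4) ≤ ⟪xh i, xh i - y i⟫ := by
    intro i hi
    have h1 : ⟪xh i, xh i - y i⟫ = ‖xh i‖ ^ 2 - ⟪xh i, y i⟫ := by
      rw [inner_sub_right, real_inner_self_eq_norm_sq]
    have h2 := real_inner_le_norm (xh i) (y i)
    have h3 := hyb i hi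
    nlinarith [norm_nonneg (xh i), norm_nonneg (y i), sq_nonneg (‖xh i‖ - My / 2)]
  have hsum : -(((Finset.Icc k l).card : ℝ) * (My ^ 2 / 4))
      ≤ ∑ i ∈ Finset.Icc k l, ⟪xh i, xh i - y i⟫ := by
    calc -(((Finset.Icc k l).card : ℝ) * (My ^ 2 / 4))
        = ∑ _i ∈ Finset.Icc k l, -(My ^ 2 / 4) := by
          rw [Finset.sum_const, ← Nat.cast_smul_eq_nsmul ℝ, smul_eq_mul]; ring
      _ ≤ _ := Finset.sum_le_sum hlb
  have h7 : lam * (‖xh k‖ + ‖xh l‖ + ((Finset.Icc k l).card : ℝ) * My ^ 2 / (2 * lam))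
      = lam * (‖xh k‖ + ‖xh l‖) + ((Finset.Icc k l).card : ℝ) * (My ^ 2 / 2) := by
    field_simp
  have hgoal : lam * (∑ i ∈ Finset.Icc k (l - 1), ‖xh i - xh (i + 1)‖)
      ≤ lam * (‖xh k‖ + ‖xh l‖ + ((Finset.Icc k l).card : ℝ) * My ^ 2 / (2 * lam)) := by
    rw [h7]
    nlinarith [hcon, hsum]
  exact (mul_le_mul_iff_right₀ hlam).mp hgoal

/-- In any window of length `n+1`, there is a point with small norm. -/
lemma small_point (hlam : 0 < lam) {My : ℝ} (hMy : 0 < My) (n k : ℕ)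
    (hk : 1 ≤ k) (hkn : k + n ≤ m) (hn : 1200 ≤ n)
    (hnup : 100 * lam < ((n : ℝ) + 1) * My)
    (hyb : ∀ i ∈ Finset.Icc k (k + n), ‖y i‖ ≤ My)
    (hyw : ‖∑ i ∈ Finset.Icc k (k + n), y i‖ ≤ My * Real.sqrt ((n : ℝ) + 1))
    (hopt : ∀ z : ℕ → F, En m y a b lam xh ≤ En m y a b lam z) :
    ∃ t ∈ Finset.Icc k (k + n), ‖xh t‖ ≤ 21 / 20 * My := by
  obtain ⟨t, htm, htl⟩ := lowpoint hlam hMy k (k + n) hk (by omega) hkn hyb hopt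
  refine ⟨t, htm, ?_⟩
  have hcard : (Finset.Icc k (k + n)).card = n + 1 := by rw [Nat.card_Icc]; omega
  have hcardR : ((Finset.Icc k (k + n)).card : ℝ) = (n : ℝ) + 1 := by
    rw [hcard]; push_cast; ring
  set S : F := ∑ j ∈ Finset.Icc k (k + n), xh j with hS
  have hSx : ‖S‖ ≤ 2 * lam + My * Real.sqrt ((n : ℝ) + 1) := by
    have hdecomp : S = (∑ i ∈ Finset.Icc k (k + n), (xh i - y i))
        + ∑ i ∈ Finset.Icc k (k + n), y i := by
      rw [Finset.sum_sub_distrib]; abel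
    rw [hdecomp]
    refine le_trans (norm_add_le _ _) ?_
    have h1 := window_partial hlam k (k + n) hk (by omega) hopt
    linarith
  set q : ℝ := Real.sqrt ((n : ℝ) + 1) with hq
  have hq0 : 0 ≤ q := Real.sqrt_nonneg _
  have hq34 : (34 : ℝ) ≤ q := by
    rw [hq, show (34:ℝ) = Real.sqrt 1156 by
      rw [show (1156:ℝ) = 34 ^ 2 by norm_num, Real.sqrt_sq (by norm_num)]]
    refine Real.sqrt_le_sqrt ?_
    have : (1200 : ℝ) ≤ (n : ℝ) := by exact_mod_cast hn
    linarith
  have hqq : q ^ 2 = (n : ℝ) + 1 := Real.sq_sqrt (by positivity)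
  have hqup : q ≤ ((n : ℝ) + 1) / 34 := by nlinarith
  have hkey : 2 * lam + My * q ≤ ((n : ℝ) + 1) * (My / 20) := by
    have h1 : 2 * lam ≤ ((n : ℝ) + 1) * My / 50 := by linarith
    have h2 : My * q ≤ ((n : ℝ) + 1) * My / 34 := by
      have := mul_le_mul_of_nonneg_left hqup hMy.le
      calc My * q ≤ My * (((n : ℝ) + 1) / 34) := this
        _ = ((n : ℝ) + 1) * My / 34 := by ring
    have hnn : (0:ℝ) < (n : ℝ) + 1 := by positivity
    nlinarith
  have hcnorm : ‖(((Finset.Icc k (k + n)).card : ℝ))⁻¹ • S‖ ≤ My / 20 := by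
    rw [norm_smul, Real.norm_eq_abs, hcardR, abs_of_pos (by positivity)]
    have hnn : (0:ℝ) < (n : ℝ) + 1 := by positivity
    calc ((n : ℝ) + 1)⁻¹ * ‖S‖ ≤ ((n : ℝ) + 1)⁻¹ * (((n : ℝ) + 1) * (My / 20)) := by
          refine mul_le_mul_of_nonneg_left ?_ (by positivity)
          linarith [hSx, hkey]
      _ = My / 20 := by field_simp
  calc ‖xh t‖ = ‖(xh t - (((Finset.Icc k (k + n)).card : ℝ))⁻¹ • S)
        + (((Finset.Icc k (k + n)).card : ℝ))⁻¹ • S‖ := by rw [sub_add_cancel]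
    _ ≤ ‖xh t - (((Finset.Icc k (k + n)).card : ℝ))⁻¹ • S‖
        + ‖(((Finset.Icc k (k + n)).card : ℝ))⁻¹ • S‖ := norm_add_le _ _
    _ ≤ My + My / 20 := add_le_add htl hcnorm
    _ = 21 / 20 * My := by ring

/-- The final contradiction blow-up. -/
lemma final_blow (hlam : 0 < lam) {My : ℝ} (hMy : 0 < My) (hdom : 12 * My < lam)
    (e₁ e₂ : ℕ) (he1 : 1 ≤ e₁) (he12 : e₁ ≤ e₂) (he2 : e₂ ≤ m)
    (hyb : ∀ i ∈ Finset.Icc e₁ e₂, ‖y i‖ ≤ My)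
    (hcard : ((Finset.Icc e₁ e₂).card : ℝ) * My ≤ 200 * lam + My)
    (X : ℝ) (hX25 : 25 * My < X)
    (hedge : ‖xh e₁‖ + ‖xh e₂‖ ≤ 21 / 20 * My + X)
    (hpath : X ^ 2 - (441 / 400) * My ^ 2
      ≤ 2 * My * ∑ i ∈ Finset.Icc e₁ (e₂ - 1), ‖xh i - xh (i + 1)‖)
    (hopt : ∀ z : ℕ → F, En m y a b lam xh ≤ En m y a b lam z) : False := by
  have hV := vbound0 hlam e₁ e₂ he1 he12 he2 hyb hopt
  have hbud : ((Finset.Icc e₁ e₂).card : ℝ) * My ^ 2 / (2 * lam) ≤ (100 + 1 / 24) * My := by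
    rw [div_le_iff₀ (by positivity : (0:ℝ) < 2 * lam)]
    have hcn : (0:ℝ) ≤ ((Finset.Icc e₁ e₂).card : ℝ) := by positivity
    nlinarith [hcard, hdom, hMy]
  have hVle : ∑ i ∈ Finset.Icc e₁ (e₂ - 1), ‖xh i - xh (i + 1)‖
      ≤ 21 / 20 * My + X + (100 + 1 / 24) * My := by linarith
  have h2 : 2 * My * ∑ i ∈ Finset.Icc e₁ (e₂ - 1), ‖xh i - xh (i + 1)‖
      ≤ 2 * My * (21 / 20 * My + X + (100 + 1 / 24) * My) := by
    nlinarith [hVle, hMy]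
  nlinarith [hpath, h2, mul_pos (show (0:ℝ) < X - 25 * My by linarith)
    (show (0:ℝ) < X + 23 * My by nlinarith), hMy]

lemma main_bound (hm : 1 ≤ m) (hlam : 0 < lam) {My : ℝ} (hMy : 0 < My)
    (hy : ∀ k l : ℕ, 1 ≤ k → k ≤ l → l ≤ m →
      ‖∑ i ∈ Finset.Icc k l, y i‖ ≤ My * Real.sqrt (l - k + 1))
    (hlam₂ : lam < (7 * m - Real.sqrt m) * My)
    (hopt : ∀ z : ℕ → F, En m y a b lam xh ≤ En m y a b lam z) :
    ∀ j : ℕ, 1 ≤ j → j ≤ m → ‖xh j‖ ≤ 25 * My := by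
  have hyb : ∀ i, 1 ≤ i → i ≤ m → ‖y i‖ ≤ My := by
    intro i h1 h2
    have h := hy i i h1 le_rfl h2
    rw [Finset.Icc_self, Finset.sum_singleton] at h
    have he : ((i:ℝ) - (i:ℝ) + 1) = 1 := by ring
    rw [he, Real.sqrt_one, mul_one] at h
    exact h
  obtain ⟨j₀, hj₀mem, hj₀max⟩ := Finset.exists_max_image (Finset.Icc 1 m) (fun i => ‖xh i‖)
      ⟨1, by simp only [Finset.mem_Icc]; omega⟩
  obtain ⟨hj₀1, hj₀m⟩ := Finset.mem_Icc.mp hj₀mem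
  intro j hj1 hjm
  have hjle : ‖xh j‖ ≤ ‖xh j₀‖ := hj₀max j (Finset.mem_Icc.mpr ⟨hj1, hjm⟩)
  by_contra hcontra
  push_neg at hcontra
  set X : ℝ := ‖xh j₀‖ with hX
  have hX25 : 25 * My < X := lt_of_lt_of_le hcontra hjle
  have hX0 : 0 < X := by nlinarith [hX25, hMy]
  -- lam is large
  have hlam12 : 12 * My < lam := by
    have h := pointwise hlam j₀ hj₀1 hj₀m hopt
    have h2 : X ≤ ‖y j₀‖ + ‖xh j₀ - y j₀‖ := by
      calc X = ‖y j₀ + (xh j₀ - y j₀)‖ := by rw [hX]; congr 1; abel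
        _ ≤ _ := norm_add_le _ _
    have h3 := hyb j₀ hj₀1 hj₀m
    linarith
  by_cases hbranch : (m : ℝ) * My ≤ 210 * lam
  · -- BRANCH G : global window
    obtain ⟨t, htmem, htlow⟩ := lowpoint hlam hMy 1 m le_rfl hm le_rfl
      (fun i hi => by
        simp only [Finset.mem_Icc] at hi
        exact hyb i hi.1 hi.2) hopt
    obtain ⟨ht1, htm⟩ := Finset.mem_Icc.mp htmem
    have hcard : (Finset.Icc 1 m).card = m := by rw [Nat.card_Icc]; omega
    -- bound on the mean
    have hSfull : ‖∑ i ∈ Finset.Icc 1 m, xh i‖ < 7 * m * My := by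
      have h1 := window_full hlam hm hopt
      have h2 := hy 1 m le_rfl hm le_rfl
      have h2' : ‖∑ i ∈ Finset.Icc 1 m, y i‖ ≤ My * Real.sqrt m := by
        rw [show ((m:ℝ) - (1:ℕ) + 1) = (m:ℝ) by push_cast; ring] at h2
        exact h2
      have h3 : ∑ i ∈ Finset.Icc 1 m, xh i
          = (∑ i ∈ Finset.Icc 1 m, (xh i - y i)) + ∑ i ∈ Finset.Icc 1 m, y i := by
        rw [Finset.sum_sub_distrib]; abel
      have h4 : ‖∑ i ∈ Finset.Icc 1 m, xh i‖
          ≤ lam + My * Real.sqrt m := by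
        rw [h3]
        refine le_trans (norm_add_le _ _) ?_
        linarith
      nlinarith [h4, hlam₂, Real.sqrt_nonneg (m:ℝ), hMy]
    have hrt : ‖xh t‖ < 8 * My := by
      have hc7 : ‖(((Finset.Icc 1 m).card : ℝ))⁻¹ • ∑ i ∈ Finset.Icc 1 m, xh i‖ < 7 * My := by
        rw [norm_smul, Real.norm_eq_abs, hcard, abs_of_pos
          (by positivity : (0:ℝ) < ((m:ℕ):ℝ)⁻¹)]
        have hm0 : (0:ℝ) < (m:ℝ) := by exact_mod_cast hm
        rw [inv_mul_lt_iff₀ hm0]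
        calc ‖∑ i ∈ Finset.Icc 1 m, xh i‖ < 7 * m * My := hSfull
          _ = (m:ℝ) * (7 * My) := by ring
      calc ‖xh t‖ = ‖(xh t - (((Finset.Icc 1 m).card : ℝ))⁻¹ • ∑ i ∈ Finset.Icc 1 m, xh i)
            + (((Finset.Icc 1 m).card : ℝ))⁻¹ • ∑ i ∈ Finset.Icc 1 m, xh i‖ := by
            rw [sub_add_cancel]
        _ ≤ ‖xh t - (((Finset.Icc 1 m).card : ℝ))⁻¹ • ∑ i ∈ Finset.Icc 1 m, xh i‖
            + ‖(((Finset.Icc 1 m).card : ℝ))⁻¹ • ∑ i ∈ Finset.Icc 1 m, xh i‖ := norm_add_le _ _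
        _ < My + 7 * My := by linarith [htlow, hc7]
        _ = 8 * My := by ring
    -- V bound
    have hV := vbound0 hlam 1 m le_rfl hm le_rfl
      (fun i hi => by
        simp only [Finset.mem_Icc] at hi
        exact hyb i hi.1 hi.2) hopt
    have hbud : ((Finset.Icc 1 m).card : ℝ) * My ^ 2 / (2 * lam) ≤ 105 * My := by
      rw [hcard, div_le_iff₀ (by positivity : (0:ℝ) < 2 * lam)]
      nlinarith [hbranch, hMy, hlam]
    have hr1 : ‖xh 1‖ ≤ X := hj₀max 1 (by simp only [Finset.mem_Icc]; omega)
    have hrm : ‖xh m‖ ≤ X := hj₀max m (by simp only [Finset.mem_Icc]; omega)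
    -- path bound
    have hpath : X ^ 2 - ‖xh t‖ ^ 2
        ≤ 2 * My * ∑ i ∈ Finset.Icc 1 (m - 1), ‖xh i - xh (i + 1)‖ := by
      rcases le_or_gt t j₀ with hto | hto
      · have hp := sq_path_up hlam t j₀ ht1 hto hj₀m hyb hopt
        have hmono : ∑ i ∈ Finset.Icc t (j₀ - 1), ‖xh i - xh (i + 1)‖
            ≤ ∑ i ∈ Finset.Icc 1 (m - 1), ‖xh i - xh (i + 1)‖ := by
          refine Finset.sum_le_sum_of_subset_of_nonneg ?_ (fun i _ _ => norm_nonneg _)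
          intro i hi; simp only [Finset.mem_Icc] at hi ⊢; omega
        nlinarith [hp, hmono, hMy]
      · have hp := sq_path_down hlam j₀ t hj₀1 hto.le htm hyb hopt
        have hmono : ∑ i ∈ Finset.Icc j₀ (t - 1), ‖xh i - xh (i + 1)‖
            ≤ ∑ i ∈ Finset.Icc 1 (m - 1), ‖xh i - xh (i + 1)‖ := by
          refine Finset.sum_le_sum_of_subset_of_nonneg ?_ (fun i _ _ => norm_nonneg _)
          intro i hi; simp only [Finset.mem_Icc] at hi ⊢; omega
        nlinarith [hp, hmono, hMy]
    -- contradiction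
    have hfin : X ^ 2 - 64 * My ^ 2 ≤ 2 * My * (2 * X + 105 * My) := by
      have h6 : ∑ i ∈ Finset.Icc 1 (m - 1), ‖xh i - xh (i + 1)‖ ≤ 2 * X + 105 * My := by
        linarith [hV, hbud, hr1, hrm]
      have h7 : 2 * My * ∑ i ∈ Finset.Icc 1 (m - 1), ‖xh i - xh (i + 1)‖
          ≤ 2 * My * (2 * X + 105 * My) :=
        mul_le_mul_of_nonneg_left h6 (by positivity)
      nlinarith [hpath, h7, norm_nonneg (xh t), hrt, hMy]
    nlinarith [hfin, mul_pos (show (0:ℝ) < X - 25 * My by linarith)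
      (show (0:ℝ) < X + 21 * My by nlinarith), hMy]
  · -- BRANCH L : local window
    push_neg at hbranch
    set n : ℕ := ⌊100 * lam / My⌋₊ with hn
    have hnup : (n : ℝ) ≤ 100 * lam / My := Nat.floor_le (by positivity)
    have hnupM : (n : ℝ) * My ≤ 100 * lam := by
      rw [le_div_iff₀ hMy] at hnup
      linarith
    have hnlowM : 100 * lam < ((n : ℝ) + 1) * My := by
      have := Nat.lt_floor_add_one (100 * lam / My)
      rw [div_lt_iff₀ hMy] at this
      push_cast at this ⊢
      linarith
    have hn1200 : 1200 ≤ n := by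
      rw [hn]
      rw [Nat.le_floor_iff (by positivity)]
      rw [le_div_iff₀ hMy]
      push_cast
      nlinarith [hlam12, hMy]
    have h2nm : 2 * n < m := by
      have h1 : (2 * (n:ℝ)) * My ≤ 200 * lam := by linarith
      have h2 : (2 * (n:ℝ)) * My < (m : ℝ) * My := by nlinarith [hbranch, hlam]
      have h3 : (2 * (n:ℝ)) < (m : ℝ) := by
        exact lt_of_mul_lt_mul_right h2 hMy.le
      exact_mod_cast h3
    -- helper for small_point calls
    have hsp : ∀ k : ℕ, 1 ≤ k → k + n ≤ m →
        ∃ t ∈ Finset.Icc k (k + n), ‖xh t‖ ≤ 21 / 20 * My := by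
      intro k hk hkn
      refine small_point hlam hMy n k hk hkn hn1200 hnlowM
        (fun i hi => by
          simp only [Finset.mem_Icc] at hi
          exact hyb i (by omega) (by omega)) ?_ hopt
      have h := hy k (k + n) hk (by omega) hkn
      rw [show ((k + n : ℕ) : ℝ) - (k:ℕ) + 1 = (n:ℝ) + 1 by push_cast; ring] at h
      exact h
    rcases le_or_gt (n + 1) j₀ with hleft | hleft
    · -- left room: j₀ - n ≥ 1
      obtain ⟨t, htmem, htlow⟩ := hsp (j₀ - n) (by omega) (by omega)
      rw [show j₀ - n + n = j₀ by omega] at htmem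
      obtain ⟨ht1, htj⟩ := Finset.mem_Icc.mp htmem
      have htne : t ≠ j₀ := by
        intro h
        rw [h] at htlow
        nlinarith [htlow, hX25, hMy]
      have htj' : t < j₀ := lt_of_le_of_ne htj htne
      have ht1' : 1 ≤ t := by omega
      rcases le_or_gt (j₀ + n) m with hright | hright
      · -- both rooms : I = [t, t']
        obtain ⟨t', ht'mem, ht'low⟩ := hsp j₀ hj₀1 hright
        obtain ⟨ht'1, ht'j⟩ := Finset.mem_Icc.mp ht'mem
        refine final_blow hlam hMy hlam12 t t' ht1' (by omega) (by omega)
          (fun i hi => by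
            simp only [Finset.mem_Icc] at hi
            exact hyb i (by omega) (by omega)) ?_ X hX25 ?_ ?_ hopt
        · have hc : (Finset.Icc t t').card ≤ 2 * n + 1 := by
            rw [Nat.card_Icc]; omega
          have hc' : ((Finset.Icc t t').card : ℝ) ≤ 2 * (n:ℝ) + 1 := by
            exact_mod_cast hc
          nlinarith [hc', hnupM, hMy]
        · have hX21 : 21 / 20 * My ≤ X := by nlinarith
          linarith [htlow, ht'low]
        · have hp := sq_path_up hlam t j₀ ht1' htj hj₀m hyb hopt
          have hmono : ∑ i ∈ Finset.Icc t (j₀ - 1), ‖xh i - xh (i + 1)‖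
              ≤ ∑ i ∈ Finset.Icc t (t' - 1), ‖xh i - xh (i + 1)‖ := by
            refine Finset.sum_le_sum_of_subset_of_nonneg ?_ (fun i _ _ => norm_nonneg _)
            intro i hi; simp only [Finset.mem_Icc] at hi ⊢; omega
          nlinarith [hp, hmono, hMy, htlow, norm_nonneg (xh t)]
      · -- only left room : I = [t, m]
        refine final_blow hlam hMy hlam12 t m ht1' (by omega) le_rfl
          (fun i hi => by
            simp only [Finset.mem_Icc] at hi
            exact hyb i (by omega) (by omega)) ?_ X hX25 ?_ ?_ hopt
        · have hc : (Finset.Icc t m).card ≤ 2 * n + 1 := by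
            rw [Nat.card_Icc]; omega
          have hc' : ((Finset.Icc t m).card : ℝ) ≤ 2 * (n:ℝ) + 1 := by
            exact_mod_cast hc
          nlinarith [hc', hnupM, hMy]
        · have hrm : ‖xh m‖ ≤ X := hj₀max m (by simp only [Finset.mem_Icc]; omega)
          linarith [htlow, hrm]
        · have hp := sq_path_up hlam t j₀ ht1' htj hj₀m hyb hopt
          have hmono : ∑ i ∈ Finset.Icc t (j₀ - 1), ‖xh i - xh (i + 1)‖
              ≤ ∑ i ∈ Finset.Icc t (m - 1), ‖xh i - xh (i + 1)‖ := by
            refine Finset.sum_le_sum_of_subset_of_nonneg ?_ (fun i _ _ => norm_nonneg _)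
            intro i hi; simp only [Finset.mem_Icc] at hi ⊢; omega
          nlinarith [hp, hmono, hMy, htlow, norm_nonneg (xh t)]
    · -- no left room: j₀ ≤ n, so right room exists: I = [1, t']
      have hright : j₀ + n ≤ m := by omega
      obtain ⟨t', ht'mem, ht'low⟩ := hsp j₀ hj₀1 hright
      obtain ⟨ht'1, ht'j⟩ := Finset.mem_Icc.mp ht'mem
      have ht'ne : t' ≠ j₀ := by
        intro h
        rw [h] at ht'low
        nlinarith [ht'low, hX25, hMy]
      have ht'j' : j₀ < t' := lt_of_le_of_ne ht'1 (Ne.symm ht'ne)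
      refine final_blow hlam hMy hlam12 1 t' le_rfl (by omega) (by omega)
        (fun i hi => by
          simp only [Finset.mem_Icc] at hi
          exact hyb i (by omega) (by omega)) ?_ X hX25 ?_ ?_ hopt
      · have hc : (Finset.Icc 1 t').card ≤ 2 * n + 1 := by
          rw [Nat.card_Icc]; omega
        have hc' : ((Finset.Icc 1 t').card : ℝ) ≤ 2 * (n:ℝ) + 1 := by
          exact_mod_cast hc
        nlinarith [hc', hnupM, hMy]
      · have hr1 : ‖xh 1‖ ≤ X := hj₀max 1 (by simp only [Finset.mem_Icc]; omega)
        linarith [ht'low, hr1]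
      · have hp := sq_path_down hlam j₀ t' hj₀1 ht'j'.le (by omega) hyb hopt
        have hmono : ∑ i ∈ Finset.Icc j₀ (t' - 1), ‖xh i - xh (i + 1)‖
            ≤ ∑ i ∈ Finset.Icc 1 (t' - 1), ‖xh i - xh (i + 1)‖ := by
          refine Finset.sum_le_sum_of_subset_of_nonneg ?_ (fun i _ _ => norm_nonneg _)
          intro i hi; simp only [Finset.mem_Icc] at hi ⊢; omega
        nlinarith [hp, hmono, hMy, ht'low, norm_nonneg (xh t')]

end GFL

open Finset

/-- Lemma 4.4: uniform norm bound `max_i ‖x̂_i‖ ≤ 25 M_y` for the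
one-interval group fused lasso minimizer when `λ < (7m - √m) M_y`. -/
theorem group_fused_lasso_uniform_norm_bound
    (p m : ℕ) (hp : 1 ≤ p) (hm : 1 ≤ m)
    (y : ℕ → EuclideanSpace ℝ (Fin p)) (a b : EuclideanSpace ℝ (Fin p))
    (lam My : ℝ) (hlam : 0 < lam) (hMy : 0 < My)
    (hy : ∀ k l : ℕ, 1 ≤ k → k ≤ l → l ≤ m →
      ‖∑ i ∈ Finset.Icc k l, y i‖ ≤ My * Real.sqrt (l - k + 1))
    (hlam₂ : lam < (7 * m - Real.sqrt m) * My)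
    (G : (ℕ → EuclideanSpace ℝ (Fin p)) → ℝ)
    (hG : ∀ z : ℕ → EuclideanSpace ℝ (Fin p), G z =
      ∑ i ∈ Finset.Icc 1 m, ‖z i - y i‖ ^ 2
        + lam * (‖a - z 1‖ + ‖z m - b‖ + ∑ i ∈ Finset.Icc 1 (m - 1), ‖z i - z (i + 1)‖))
    (xh : ℕ → EuclideanSpace ℝ (Fin p))
    (hmin : ∀ z : ℕ → EuclideanSpace ℝ (Fin p), G xh ≤ G z) :
    ∀ i : ℕ, 1 ≤ i → i ≤ m → ‖xh i‖ ≤ 25 * My := by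
  have hopt : ∀ z : ℕ → EuclideanSpace ℝ (Fin p),
      GFL.En m y a b lam xh ≤ GFL.En m y a b lam z := by
    intro z
    have h1 := hmin z
    rw [hG xh, hG z] at h1
    exact h1
  exact GFL.main_bound hm hlam hMy hy hlam₂ hopt
end

section
/- In the setting of the one-interval group fused lasso (y_i ∈ ℝ^p satisfying ‖∑_{i=k}^{l} y_i‖ ≤ M_y·√(l−k+1) for all 1 ≤ k ≤ l ≤ m, x̂ the minimizer of G with x̂_0 = a, x̂_{m+1} = b, 25²·M_y ≤ λ < (7m − √m)·M_y, and max_i ‖x̂_i‖ ≤ M_d where M_d = 25·M_y): if x̂_l ≠ x̂_{l+1} and u_l^T x̂_l ≤ −√(M_d·M_y²/λ), then l ≤ l_0 + 1, where l_0 = ⌊M_y²/(u_l^T x̂_l)²⌋ and u_l = (x̂_{l+1} − x̂_l)/‖x̂_{l+1} − x̂_l‖. Symmetrically, if x̂_l ≠ x̂_{l−1} and u_{l−1}^T x̂_l > √(M_d·M_y²/λ), then m − l ≤ l_1 + 1 with l_1 = ⌊M_y²/(u_{l−1}^T x̂_l)²⌋. -/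
open Finset
open scoped RealInnerProductSpace

lemma aux_eps {A B e0 : ℝ} (he0 : 0 < e0)
    (h : ∀ e : ℝ, 0 < e → e ≤ e0 → 0 ≤ A + e * B) : 0 ≤ A := by
  by_contra hA
  push_neg at hA
  rcases le_or_gt B 0 with hB | hB
  · have h1 := h e0 he0 le_rfl
    nlinarith
  · have he : 0 < min e0 (-A / (2 * B)) :=
      lt_min he0 (div_pos (by linarith) (by linarith))
    have h1 := h _ he (min_le_left _ _)
    have h2 : min e0 (-A / (2 * B)) * B ≤ (-A / (2 * B)) * B :=
      mul_le_mul_of_nonneg_right (min_le_right _ _) hB.le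
    have h3 : (-A / (2 * B)) * B = -A / 2 := by field_simp
    nlinarith

lemma aux_norm_expand {p : ℕ} (d c : EuclideanSpace ℝ (Fin p)) (hd : d ≠ 0) :
    ‖d + c‖ - ‖d‖ ≤ (2 * ⟪d, c⟫ + ‖c‖ ^ 2) / (2 * ‖d‖) := by
  have hd0 : (0:ℝ) < ‖d‖ := norm_pos_iff.mpr hd
  rw [le_div_iff₀ (by positivity)]
  have h := norm_add_sq_real d c
  nlinarith [sq_nonneg (‖d + c‖ - ‖d‖)]

lemma sqrt_bound (n : ℕ) (My tb : ℝ) (htb : 0 < tb) :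
    My * Real.sqrt n - (n : ℝ) * tb ≤ My ^ 2 / (4 * tb) := by
  have hsq : Real.sqrt n ^ 2 = (n : ℝ) := Real.sq_sqrt (Nat.cast_nonneg n)
  set s := Real.sqrt n with hs_def
  clear_value s
  rw [le_div_iff₀ (by positivity), ← hsq]
  nlinarith [sq_nonneg (2 * s * tb - My)]

lemma final_bound (l : ℕ) (My tb : ℝ) (hMy : 0 < My) (htb : 0 < tb) (hl1 : 1 ≤ l)
    (h : (l:ℝ) * tb ≤ My * Real.sqrt l) : (l:ℝ) * tb^2 ≤ My^2 := by
  have hsl : Real.sqrt l ^ 2 = (l:ℝ) := Real.sq_sqrt (Nat.cast_nonneg l)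
  have hs0 : 0 ≤ Real.sqrt l := Real.sqrt_nonneg _
  have hl0 : (1:ℝ) ≤ (l:ℝ) := by exact_mod_cast hl1
  nlinarith [mul_le_mul_of_nonneg_right h htb.le,
    mul_le_mul_of_nonneg_right h hs0,
    mul_le_mul_of_nonneg_right h hMy.le]

lemma aux_tv {p m : ℕ} (hm : 1 ≤ m) (w : ℕ → EuclideanSpace ℝ (Fin p)) :
    ‖w 0 - w 1‖ + ‖w m - w (m+1)‖ + ∑ i ∈ Icc 1 (m-1), ‖w i - w (i+1)‖
      = ∑ i ∈ Icc 0 m, ‖w i - w (i+1)‖ := by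
  have h1 : Icc 0 m = insert 0 (Icc 1 m) := by
    ext i; simp [Finset.mem_Icc]; omega
  have h2 : Icc 1 m = insert m (Icc 1 (m-1)) := by
    ext i; simp [Finset.mem_Icc]; omega
  have h3 : (0:ℕ) ∉ Icc 1 m := by simp
  have h4 : m ∉ Icc 1 (m-1) := by simp [Finset.mem_Icc]; omega
  rw [h1, Finset.sum_insert h3, h2, Finset.sum_insert h4]
  ring

lemma block_ineq {p m : ℕ} (hm : 1 ≤ m)
    (y : ℕ → EuclideanSpace ℝ (Fin p)) (a b : EuclideanSpace ℝ (Fin p)) (lam : ℝ)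
    (G : (ℕ → EuclideanSpace ℝ (Fin p)) → ℝ)
    (hG : ∀ z : ℕ → EuclideanSpace ℝ (Fin p), G z =
      ∑ i ∈ Finset.Icc 1 m, ‖z i - y i‖ ^ 2
        + lam * (‖a - z 1‖ + ‖z m - b‖ + ∑ i ∈ Finset.Icc 1 (m - 1), ‖z i - z (i + 1)‖))
    (xh : ℕ → EuclideanSpace ℝ (Fin p))
    (hmin : ∀ z : ℕ → EuclideanSpace ℝ (Fin p), G xh ≤ G z)
    (ha : xh 0 = a) (hb : xh (m + 1) = b)
    {k r : ℕ} (hk : 1 ≤ k) (hkr : k ≤ r) (hrm : r ≤ m)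
    (c : EuclideanSpace ℝ (Fin p)) :
    0 ≤ ∑ i ∈ Icc k r, (2 * ⟪xh i - y i, c⟫ + ‖c‖^2)
      + lam * (‖xh (k-1) - xh k - c‖ - ‖xh (k-1) - xh k‖)
      + lam * (‖xh r - xh (r+1) + c‖ - ‖xh r - xh (r+1)‖) := by
  classical
  set z : ℕ → EuclideanSpace ℝ (Fin p) :=
    fun i => if k ≤ i ∧ i ≤ r then xh i + c else xh i with hzdef
  have hzin : ∀ i, k ≤ i → i ≤ r → z i = xh i + c := by
    intro i h1 h2; simp [hzdef, h1, h2]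
  have hzout : ∀ i, ¬ (k ≤ i ∧ i ≤ r) → z i = xh i := by
    intro i h1; simp only [hzdef]; rw [if_neg h1]
  have h0 := hmin z
  rw [hG z, hG xh] at h0
  have hdata : ∑ i ∈ Icc 1 m, ‖z i - y i‖ ^ 2
      = ∑ i ∈ Icc 1 m, ‖xh i - y i‖ ^ 2
        + ∑ i ∈ Icc k r, (2 * ⟪xh i - y i, c⟫ + ‖c‖^2) := by
    have hsub : Icc k r ⊆ Icc 1 m := by
      intro i hi; simp only [Finset.mem_Icc] at hi ⊢; omega
    have e1 : ∑ i ∈ Icc k r, (‖z i - y i‖ ^ 2 - ‖xh i - y i‖ ^ 2)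
        = ∑ i ∈ Icc 1 m, (‖z i - y i‖ ^ 2 - ‖xh i - y i‖ ^ 2) := by
      apply Finset.sum_subset hsub
      intro i _ hi2
      rw [hzout i (by simpa [Finset.mem_Icc] using hi2)]
      ring
    have e2 : ∑ i ∈ Icc k r, (‖z i - y i‖ ^ 2 - ‖xh i - y i‖ ^ 2)
        = ∑ i ∈ Icc k r, (2 * ⟪xh i - y i, c⟫ + ‖c‖^2) := by
      apply Finset.sum_congr rfl
      intro i hi
      simp only [Finset.mem_Icc] at hi
      rw [hzin i hi.1 hi.2]
      have he : xh i + c - y i = (xh i - y i) + c := by abel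
      rw [he, norm_add_sq_real]
      ring
    have e3 := e1.symm.trans e2
    rw [Finset.sum_sub_distrib] at e3
    linarith
  have hz0 : z 0 = xh 0 := hzout 0 (by omega)
  have hzm1 : z (m+1) = xh (m+1) := hzout (m+1) (by omega)
  have htv : ‖a - z 1‖ + ‖z m - b‖ + ∑ i ∈ Icc 1 (m-1), ‖z i - z (i+1)‖
      = (‖a - xh 1‖ + ‖xh m - b‖ + ∑ i ∈ Icc 1 (m-1), ‖xh i - xh (i+1)‖)
        + ((‖xh (k-1) - xh k - c‖ - ‖xh (k-1) - xh k‖)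
          + (‖xh r - xh (r+1) + c‖ - ‖xh r - xh (r+1)‖)) := by
    have hza : ‖a - z 1‖ = ‖z 0 - z 1‖ := by rw [hz0, ha]
    have hzb : ‖z m - b‖ = ‖z m - z (m+1)‖ := by rw [hzm1, hb]
    have hxa : ‖a - xh 1‖ = ‖xh 0 - xh 1‖ := by rw [ha]
    have hxb : ‖xh m - b‖ = ‖xh m - xh (m+1)‖ := by rw [hb]
    rw [hza, hzb, hxa, hxb, aux_tv hm z, aux_tv hm xh]
    have hk1 : k - 1 + 1 = k := by omega
    have eL : ‖z (k-1) - z ((k-1)+1)‖ - ‖xh (k-1) - xh ((k-1)+1)‖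
        = ‖xh (k-1) - xh k - c‖ - ‖xh (k-1) - xh k‖ := by
      rw [hk1, hzout (k-1) (by omega), hzin k le_rfl hkr]
      have he : xh (k-1) - (xh k + c) = xh (k-1) - xh k - c := by abel
      rw [he]
    have eR : ‖z r - z (r+1)‖ - ‖xh r - xh (r+1)‖
        = ‖xh r - xh (r+1) + c‖ - ‖xh r - xh (r+1)‖ := by
      rw [hzin r hkr le_rfl, hzout (r+1) (by omega)]
      have he : xh r + c - xh (r+1) = xh r - xh (r+1) + c := by abel
      rw [he]
    have key : ∑ i ∈ Icc 0 m, (‖z i - z (i+1)‖ - ‖xh i - xh (i+1)‖)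
        = (‖xh (k-1) - xh k - c‖ - ‖xh (k-1) - xh k‖)
          + (‖xh r - xh (r+1) + c‖ - ‖xh r - xh (r+1)‖) := by
      rw [Finset.sum_eq_add_of_mem (k-1) r
        (by simp only [Finset.mem_Icc]; omega)
        (by simp only [Finset.mem_Icc]; omega) (by omega) ?_, eL, eR]
      intro i hi hi2
      simp only [Finset.mem_Icc] at hi
      by_cases hik : k ≤ i ∧ i ≤ r
      · rw [hzin i hik.1 hik.2, hzin (i+1) (by omega) (by omega)]
        have he : xh i + c - (xh (i+1) + c) = xh i - xh (i+1) := by abel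
        rw [he]; ring
      · rw [hzout i hik, hzout (i+1) (by omega)]
        ring
    rw [Finset.sum_sub_distrib] at key
    linarith
  rw [hdata, htv] at h0
  nlinarith [h0]

set_option maxHeartbeats 4000000 in
/-- Lemma 4.5: location bounds for indices of the one-interval group fused
lasso solution with strongly negative (resp. positive) derivative direction. -/
theorem group_fused_lasso_order_lemma
    (p m : ℕ) (hp : 1 ≤ p) (hm : 1 ≤ m)
    (y : ℕ → EuclideanSpace ℝ (Fin p)) (a b : EuclideanSpace ℝ (Fin p))
    (lam My : ℝ) (hMy : 0 < My)
    (hy : ∀ k l : ℕ, 1 ≤ k → k ≤ l → l ≤ m →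
      ‖∑ i ∈ Finset.Icc k l, y i‖ ≤ My * Real.sqrt (l - k + 1))
    (hlam₁ : 25 ^ 2 * My ≤ lam)
    (hlam₂ : lam < (7 * m - Real.sqrt m) * My)
    (G : (ℕ → EuclideanSpace ℝ (Fin p)) → ℝ)
    (hG : ∀ z : ℕ → EuclideanSpace ℝ (Fin p), G z =
      ∑ i ∈ Finset.Icc 1 m, ‖z i - y i‖ ^ 2
        + lam * (‖a - z 1‖ + ‖z m - b‖ + ∑ i ∈ Finset.Icc 1 (m - 1), ‖z i - z (i + 1)‖))
    (xh : ℕ → EuclideanSpace ℝ (Fin p))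
    (hmin : ∀ z : ℕ → EuclideanSpace ℝ (Fin p), G xh ≤ G z)
    (ha : xh 0 = a) (hb : xh (m + 1) = b)
    (Md : ℝ) (hMd : Md = 25 * My)
    (hbound : ∀ i : ℕ, 1 ≤ i → i ≤ m → ‖xh i‖ ≤ Md)
    (u : ℕ → EuclideanSpace ℝ (Fin p))
    (hu : ∀ i : ℕ, xh i ≠ xh (i + 1) → u i = ‖xh (i + 1) - xh i‖⁻¹ • (xh (i + 1) - xh i))
    (l : ℕ) (hl1 : 1 ≤ l) (hlm : l ≤ m) :
    (xh l ≠ xh (l + 1) → ⟪u l, xh l⟫ ≤ -Real.sqrt (Md * My ^ 2 / lam) →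
      l ≤ ⌊My ^ 2 / ⟪u l, xh l⟫ ^ 2⌋₊ + 1) ∧
    (xh l ≠ xh (l - 1) → Real.sqrt (Md * My ^ 2 / lam) < ⟪u (l - 1), xh l⟫ →
      m - l ≤ ⌊My ^ 2 / ⟪u (l - 1), xh l⟫ ^ 2⌋₊ + 1) := by
  have hlam0 : 0 < lam := lt_of_lt_of_le (by nlinarith) hlam₁
  have hMd0 : 0 < Md := by rw [hMd]; positivity
  have hMdlam : 0 < Md * My^2 / lam := by positivity
  have hsqpos : 0 < Real.sqrt (Md * My^2 / lam) := Real.sqrt_pos.mpr hMdlam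
  -- the key arithmetic bound, used in both parts
  have harith : ∀ tb : ℝ, Real.sqrt (Md * My^2 / lam) ≤ tb → My^2/(4*tb) ≤ lam/2 := by
    intro tb htb
    have htb0 : 0 < tb := lt_of_lt_of_le hsqpos htb
    have hsq : Real.sqrt (Md * My^2 / lam) ^ 2 = Md * My^2 / lam :=
      Real.sq_sqrt hMdlam.le
    have htb2 : Md * My^2 / lam ≤ tb^2 := by
      rw [← hsq]
      exact pow_le_pow_left₀ (Real.sqrt_nonneg _) htb 2
    have h1 : 25*My^3 ≤ lam*tb^2 := by
      rw [div_le_iff₀ hlam0] at htb2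
      nlinarith [htb2]
    rw [div_le_div_iff₀ (by positivity) two_pos]
    nlinarith [mul_le_mul_of_nonneg_left h1 hlam0.le,
      mul_le_mul_of_nonneg_right hlam₁ (pow_pos hMy 3).le,
      mul_pos hlam0 htb0, sq_nonneg (2*lam*tb - My^2), sq_nonneg (2*lam*tb + My^2)]
  -- bound on inner products of partial sums of y with a unit vector
  have hYsum : ∀ (v : EuclideanSpace ℝ (Fin p)), ‖v‖ = 1 → ∀ k r : ℕ, 1 ≤ k → k ≤ r → r ≤ m →
      |∑ i ∈ Icc k r, ⟪y i, v⟫| ≤ My * Real.sqrt ((r:ℝ) - (k:ℝ) + 1) := by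
    intro v hv k r hk hkr hrm
    rw [← sum_inner]
    refine le_trans (abs_real_inner_le_norm _ _) ?_
    rw [hv, mul_one]
    exact hy k r hk hkr hrm
  constructor
  · -- Part 1
    intro hjump ht
    have hg : 0 < ‖xh (l+1) - xh l‖ := norm_pos_iff.mpr (sub_ne_zero.mpr (Ne.symm hjump))
    have huval := hu l hjump
    have hun : ‖u l‖ = 1 := by
      rw [huval, norm_smul, norm_inv, norm_norm, inv_mul_cancel₀ hg.ne']
    have huv : xh (l+1) - xh l = ‖xh (l+1) - xh l‖ • u l := by
      rw [huval, smul_smul, mul_inv_cancel₀ hg.ne', one_smul]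
    obtain ⟨tt, htt_def⟩ : ∃ tt : ℝ, tt = ⟪xh l, u l⟫ := ⟨_, rfl⟩
    have httc : ⟪u l, xh l⟫ = tt := by rw [htt_def]; exact real_inner_comm _ _
    have htt : tt ≤ -Real.sqrt (Md * My^2 / lam) := by rw [htt_def, real_inner_comm]; exact ht
    obtain ⟨tb, htb_def⟩ : ∃ tb : ℝ, tb = -tt := ⟨_, rfl⟩
    have htb0 : 0 < tb := by rw [htb_def]; linarith
    have htbge : Real.sqrt (Md * My^2 / lam) ≤ tb := by rw [htb_def]; linarith
    have hhalf : My^2/(4*tb) ≤ lam/2 := harith tb htbge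
    -- the right-hand boundary term
    have hRt : ∀ ε : ℝ, 0 < ε → ε ≤ ‖xh (l+1) - xh l‖ →
        ‖xh l - xh (l+1) + ε • u l‖ - ‖xh l - xh (l+1)‖ = -ε := by
      intro ε hε1 hε2
      have e1 : xh l - xh (l+1) + ε • u l = (ε - ‖xh (l+1) - xh l‖) • u l := by
        rw [sub_smul, ← huv]; abel
      have e2 : ‖xh l - xh (l+1)‖ = ‖xh (l+1) - xh l‖ := norm_sub_rev _ _
      rw [e1, e2, norm_smul, hun, mul_one, Real.norm_eq_abs, abs_of_nonpos (by linarith)]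
      ring
    -- sum simplification
    have hsum : ∀ (k : ℕ) (ε : ℝ), k ≤ l →
        ∑ i ∈ Icc k l, (2*⟪xh i - y i, ε • u l⟫ + ‖ε • u l‖^2)
        = ε * (2 * ∑ i ∈ Icc k l, ⟪xh i - y i, u l⟫) + ((l:ℝ) - k + 1) * ε^2 := by
      intro k ε hkl
      have hcard : (((Icc k l).card : ℕ) : ℝ) = (l:ℝ) - k + 1 := by
        rw [Nat.card_Icc, Nat.cast_sub (by omega)]
        push_cast; ring
      have e1 : ∀ i ∈ Icc k l, 2*⟪xh i - y i, ε • u l⟫ + ‖ε • u l‖^2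
          = (2*ε) * ⟪xh i - y i, u l⟫ + ε^2 := by
        intro i _
        rw [real_inner_smul_right, norm_smul, hun, mul_one, Real.norm_eq_abs, sq_abs]
        ring
      rw [Finset.sum_congr rfl e1, Finset.sum_add_distrib, ← Finset.mul_sum,
        Finset.sum_const, nsmul_eq_mul, hcard]
      ring
    -- suffix sums are nonnegative
    have hS : ∀ k : ℕ, 1 ≤ k → k ≤ l → 0 ≤ ∑ i ∈ Icc k l, ⟪xh i - y i, u l⟫ := by
      intro k hk hkl
      have h2S : 0 ≤ 2 * ∑ i ∈ Icc k l, ⟪xh i - y i, u l⟫ := by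
        apply aux_eps (B := (l:ℝ) - k + 1) hg
        intro ε hε1 hε2
        have bi := block_ineq hm y a b lam G hG xh hmin ha hb hk hkl hlm (ε • u l)
        rw [hsum k ε hkl, hRt ε hε1 hε2] at bi
        have hLt : ‖xh (k-1) - xh k - ε • u l‖ - ‖xh (k-1) - xh k‖ ≤ ε := by
          have h5 := norm_sub_le (xh (k-1) - xh k) (ε • u l)
          rw [norm_smul, hun, mul_one, Real.norm_eq_abs, abs_of_pos hε1] at h5
          linarith
        have hLt' : lam * (‖xh (k-1) - xh k - ε • u l‖ - ‖xh (k-1) - xh k‖) ≤ lam * ε :=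
          mul_le_mul_of_nonneg_left hLt hlam0.le
        nlinarith [bi, hLt', hε1]
      linarith
    -- jump monotonicity inequality
    have hL2 : ∀ k : ℕ, 1 ≤ k → k < l → xh k ≠ xh (k+1) →
        lam - 2 * ∑ i ∈ Icc (k+1) l, ⟪xh i - y i, u l⟫ ≤ lam * ⟪u k, u l⟫ := by
      intro k hk hkl hjk
      have hg' : 0 < ‖xh (k+1) - xh k‖ := norm_pos_iff.mpr (sub_ne_zero.mpr (Ne.symm hjk))
      have huval' := hu k hjk
      have huv' : xh (k+1) - xh k = ‖xh (k+1) - xh k‖ • u k := by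
        rw [huval', smul_smul, mul_inv_cancel₀ hg'.ne', one_smul]
      have key : 0 ≤ (2 * ∑ i ∈ Icc (k+1) l, ⟪xh i - y i, u l⟫ + lam * ⟪u k, u l⟫ - lam) := by
        apply aux_eps (B := ((l:ℝ) - (k+1) + 1) + lam/(2*‖xh (k+1) - xh k‖)) hg
        intro ε hε1 hε2
        have bi := block_ineq hm y a b lam G hG xh hmin ha hb
          (k := k+1) (r := l) (by omega) (by omega) hlm (ε • u l)
        simp only [Nat.add_sub_cancel] at bi
        rw [hsum (k+1) ε (by omega), hRt ε hε1 hε2] at bi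
        push_cast at bi
        -- left gap term via expansion
        have hd : xh k - xh (k+1) = -(‖xh (k+1) - xh k‖ • u k) := by
          rw [← huv']; abel
        have hdne : xh k - xh (k+1) ≠ 0 := sub_ne_zero.mpr hjk
        have hexp := aux_norm_expand (xh k - xh (k+1)) (-(ε • u l)) hdne
        have hinner : ⟪xh k - xh (k+1), -(ε • u l)⟫ = ε * (‖xh (k+1) - xh k‖ * ⟪u k, u l⟫) := by
          rw [hd, inner_neg_neg, real_inner_smul_left, real_inner_smul_right]
          ring
        have hnorm2 : ‖-(ε • u l)‖^2 = ε^2 := by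
          rw [norm_neg, norm_smul, hun, mul_one, Real.norm_eq_abs, sq_abs]
        have hnrev : ‖xh k - xh (k+1)‖ = ‖xh (k+1) - xh k‖ := norm_sub_rev _ _
        rw [← sub_eq_add_neg] at hexp
        rw [hinner, hnorm2, hnrev] at hexp
        have hQ : (2 * (ε * (‖xh (k+1) - xh k‖ * ⟪u k, u l⟫)) + ε^2) / (2*‖xh (k+1) - xh k‖)
            = ε * ⟪u k, u l⟫ + ε^2 * (1/(2*‖xh (k+1) - xh k‖)) := by
          field_simp
        rw [hQ] at hexp
        have hexp' : lam * (‖xh k - xh (k+1) - ε • u l‖ - ‖xh (k+1) - xh k‖)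
            ≤ lam * (ε * ⟪u k, u l⟫ + ε^2 * (1/(2*‖xh (k+1) - xh k‖))) :=
          mul_le_mul_of_nonneg_left hexp hlam0.le
        rw [hnrev] at bi
        have hBpos : (0:ℝ) < 2*‖xh (k+1) - xh k‖ := by positivity
        have hfin : 0 ≤ ε * (2 * ∑ i ∈ Icc (k+1) l, ⟪xh i - y i, u l⟫ + lam * ⟪u k, u l⟫ - lam)
            + ε^2 * (((l:ℝ) - (k+1) + 1) + lam/(2*‖xh (k+1) - xh k‖)) := by
          have hlam2g : lam * (ε^2 * (1/(2*‖xh (k+1) - xh k‖))) = ε^2 * (lam/(2*‖xh (k+1) - xh k‖)) := by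
            field_simp
          nlinarith [bi, hexp', hε1]
        nlinarith [hfin, hε1]
      linarith
    -- downward induction: inner products with u l are at most tt
    have hmono : ∀ d : ℕ, ∀ k : ℕ, 1 ≤ k → k + d = l →
        ∀ i : ℕ, k ≤ i → i ≤ l → ⟪xh i, u l⟫ ≤ tt := by
      intro d
      induction d with
      | zero =>
        intro k hk hkl i hki hil
        have : i = l := by omega
        rw [this, htt_def]
      | succ d ih =>
        intro k hk hkl i hki hil
        rcases Nat.eq_or_lt_of_le hki with heq | hlt
        · -- i = k
          rw [← heq]
          have hkl' : k < l := by omega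
          have ihall : ∀ j : ℕ, k+1 ≤ j → j ≤ l → ⟪xh j, u l⟫ ≤ tt :=
            ih (k+1) (by omega) (by omega)
          by_cases hjk : xh k = xh (k+1)
          · rw [show (⟪xh k, u l⟫) = ⟪xh (k+1), u l⟫ by rw [hjk]]
            exact ihall (k+1) le_rfl (by omega)
          · have hσ := hL2 k hk hkl' hjk
            -- bound the suffix sum by lam/2
            have hcard2 : ((Icc (k+1) l).card : ℝ) = ((l - k : ℕ) : ℝ) := by
              rw [Nat.card_Icc]
              congr 1
              omega
            have hxsum : ∑ i ∈ Icc (k+1) l, ⟪xh i, u l⟫ ≤ ((l - k : ℕ) : ℝ) * tt := by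
              have h6 := Finset.sum_le_card_nsmul (Icc (k+1) l)
                (fun i => ⟪xh i, u l⟫) tt
                (fun i hi => by
                  simp only [Finset.mem_Icc] at hi
                  exact ihall i hi.1 hi.2)
              rw [nsmul_eq_mul] at h6
              rw [← hcard2]
              exact h6
            have hysum := hYsum (u l) hun (k+1) l (by omega) (by omega) hlm
            push_cast at hysum
            have hsqeq : Real.sqrt ((l:ℝ) - ((k:ℝ)+1) + 1) = Real.sqrt (((l - k : ℕ) : ℝ)) := by
              congr 1
              rw [Nat.cast_sub (by omega)]
              ring
            have hSsplit : ∑ i ∈ Icc (k+1) l, ⟪xh i - y i, u l⟫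
                = ∑ i ∈ Icc (k+1) l, ⟪xh i, u l⟫ - ∑ i ∈ Icc (k+1) l, ⟪y i, u l⟫ := by
              rw [← Finset.sum_sub_distrib]
              exact Finset.sum_congr rfl (fun i _ => inner_sub_left _ _ _)
            have hsb := sqrt_bound (l - k) My tb htb0
            have hSle : ∑ i ∈ Icc (k+1) l, ⟪xh i - y i, u l⟫ ≤ lam/2 := by
              rw [hSsplit]
              push_cast at hsqeq
              rw [hsqeq] at hysum
              have h7 : ((l - k:ℕ):ℝ) * tt = -(((l - k:ℕ):ℝ) * tb) := by
                rw [htb_def]; ring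
              have habs := abs_le.mp hysum
              calc ∑ i ∈ Icc (k+1) l, ⟪xh i, u l⟫ - ∑ i ∈ Icc (k+1) l, ⟪y i, u l⟫
                  ≤ ((l - k:ℕ):ℝ) * tt + My * Real.sqrt (((l - k:ℕ):ℝ)) := by
                    linarith [hxsum, habs.1]
                _ ≤ My^2/(4*tb) := by rw [h7]; linarith [hsb]
                _ ≤ lam/2 := hhalf
            have hσ0 : 0 ≤ ⟪u k, u l⟫ := by nlinarith [hσ, hSle, hlam0]
            have huv' : xh (k+1) - xh k = ‖xh (k+1) - xh k‖ • u k := by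
              rw [hu k hjk, smul_smul, mul_inv_cancel₀
                (norm_pos_iff.mpr (sub_ne_zero.mpr (Ne.symm hjk))).ne', one_smul]
            have hstep : ⟪xh k, u l⟫ ≤ ⟪xh (k+1), u l⟫ := by
              have e2 : ⟪xh (k+1) - xh k, u l⟫ = ⟪xh (k+1), u l⟫ - ⟪xh k, u l⟫ :=
                inner_sub_left _ _ _
              have e3 : ⟪xh (k+1) - xh k, u l⟫ = ‖xh (k+1) - xh k‖ * ⟪u k, u l⟫ := by
                conv_lhs => rw [huv']
                rw [real_inner_smul_left]
              have e4 : 0 ≤ ⟪xh (k+1), u l⟫ - ⟪xh k, u l⟫ := by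
                rw [← e2, e3]
                exact mul_nonneg (norm_nonneg _) hσ0
              linarith
            exact le_trans hstep (ihall (k+1) le_rfl (by omega))
        · exact ih (k+1) (by omega) (by omega) i hlt hil
    -- conclude
    have hmono' : ∀ i : ℕ, 1 ≤ i → i ≤ l → ⟪xh i, u l⟫ ≤ tt :=
      hmono (l - 1) 1 le_rfl (by omega)
    have hS1 := hS 1 le_rfl hl1
    have hcard1 : ((Icc 1 l).card : ℝ) = (l : ℝ) := by
      rw [Nat.card_Icc]
      push_cast [Nat.add_sub_cancel]
      ring
    have hxsum1 : ∑ i ∈ Icc 1 l, ⟪xh i, u l⟫ ≤ (l:ℝ) * tt := by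
      have h6 := Finset.sum_le_card_nsmul (Icc 1 l) (fun i => ⟪xh i, u l⟫) tt
        (fun i hi => by
          simp only [Finset.mem_Icc] at hi
          exact hmono' i hi.1 hi.2)
      rw [nsmul_eq_mul, hcard1] at h6
      exact h6
    have hysum1 := hYsum (u l) hun 1 l le_rfl hl1 hlm
    push_cast at hysum1
    have hsqeq1 : Real.sqrt ((l:ℝ) - 1 + 1) = Real.sqrt (l:ℝ) := by congr 1; ring
    rw [hsqeq1] at hysum1
    have hSsplit1 : ∑ i ∈ Icc 1 l, ⟪xh i - y i, u l⟫
        = ∑ i ∈ Icc 1 l, ⟪xh i, u l⟫ - ∑ i ∈ Icc 1 l, ⟪y i, u l⟫ := by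
      rw [← Finset.sum_sub_distrib]
      exact Finset.sum_congr rfl (fun i _ => inner_sub_left _ _ _)
    have hltb : (l:ℝ) * tb ≤ My * Real.sqrt (l:ℝ) := by
      rw [hSsplit1] at hS1
      have habs := abs_le.mp hysum1
      have : 0 ≤ (l:ℝ) * tt + My * Real.sqrt (l:ℝ) := by linarith [hxsum1, habs.2]
      rw [htb_def]
      linarith
    have hfin : (l:ℝ) * tt^2 ≤ My^2 := by
      have htb2 : tt^2 = tb^2 := by rw [htb_def]; ring
      rw [htb2]
      exact final_bound l My tb hMy htb0 hl1 hltb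
    have hcast : (l:ℝ) ≤ My^2 / ⟪u l, xh l⟫^2 := by
      have httpos : (0:ℝ) < tt^2 := by
        have h9 : 0 < -tt := by linarith
        have h10 : tt^2 = (-tt)^2 := by ring
        rw [h10]
        exact pow_pos h9 2
      rw [httc]
      rw [le_div_iff₀ httpos]
      linarith
    exact le_trans (Nat.le_floor hcast) (Nat.le_succ _)
  · -- Part 2
    intro hjump2 ht2
    have hl1' : l - 1 + 1 = l := by omega
    have hjk0 : xh (l-1) ≠ xh (l-1+1) := by rw [hl1']; exact Ne.symm hjump2
    have huval2 := hu (l-1) hjk0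
    rw [hl1'] at huval2
    have hg2 : 0 < ‖xh l - xh (l-1)‖ := norm_pos_iff.mpr (sub_ne_zero.mpr hjump2)
    have hun2 : ‖u (l-1)‖ = 1 := by
      rw [huval2, norm_smul, norm_inv, norm_norm, inv_mul_cancel₀ hg2.ne']
    have huv2 : xh l - xh (l-1) = ‖xh l - xh (l-1)‖ • u (l-1) := by
      rw [huval2, smul_smul, mul_inv_cancel₀ hg2.ne', one_smul]
    obtain ⟨tt, htt_def⟩ : ∃ tt : ℝ, tt = ⟪xh l, u (l-1)⟫ := ⟨_, rfl⟩
    have httc : ⟪u (l-1), xh l⟫ = tt := by rw [htt_def]; exact real_inner_comm _ _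
    have htt : Real.sqrt (Md * My^2 / lam) < tt := by
      rw [htt_def, real_inner_comm]; exact ht2
    have htt0 : 0 < tt := lt_trans hsqpos htt
    have hhalf2 : My^2/(4*tt) ≤ lam/2 := harith tt htt.le
    -- left gap term is exactly -ε
    have hLt2 : ∀ ε : ℝ, 0 < ε → ε ≤ ‖xh l - xh (l-1)‖ →
        ‖xh (l-1) - xh l - (-(ε • u (l-1)))‖ - ‖xh (l-1) - xh l‖ = -ε := by
      intro ε hε1 hε2
      have e1 : xh (l-1) - xh l - (-(ε • u (l-1))) = (ε - ‖xh l - xh (l-1)‖) • u (l-1) := by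
        rw [sub_smul, ← huv2]; abel
      have e2 : ‖xh (l-1) - xh l‖ = ‖xh l - xh (l-1)‖ := norm_sub_rev _ _
      rw [e1, e2, norm_smul, hun2, mul_one, Real.norm_eq_abs, abs_of_nonpos (by linarith)]
      ring
    -- sum simplification
    have hsum2 : ∀ (r : ℕ) (ε : ℝ), l ≤ r →
        ∑ i ∈ Icc l r, (2*⟪xh i - y i, -(ε • u (l-1))⟫ + ‖-(ε • u (l-1))‖^2)
        = ε * (-2 * ∑ i ∈ Icc l r, ⟪xh i - y i, u (l-1)⟫) + ((r:ℝ) - l + 1) * ε^2 := by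
      intro r ε hlr
      have hcard : (((Icc l r).card : ℕ) : ℝ) = (r:ℝ) - l + 1 := by
        rw [Nat.card_Icc, Nat.cast_sub (by omega)]
        push_cast; ring
      have e1 : ∀ i ∈ Icc l r, 2*⟪xh i - y i, -(ε • u (l-1))⟫ + ‖-(ε • u (l-1))‖^2
          = (-2*ε) * ⟪xh i - y i, u (l-1)⟫ + ε^2 := by
        intro i _
        rw [inner_neg_right, real_inner_smul_right, norm_neg, norm_smul, hun2, mul_one,
          Real.norm_eq_abs, sq_abs]
        ring
      rw [Finset.sum_congr rfl e1, Finset.sum_add_distrib, ← Finset.mul_sum,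
        Finset.sum_const, nsmul_eq_mul, hcard]
      ring
    -- prefix sums (starting at l) are nonpositive
    have hT : ∀ r : ℕ, l ≤ r → r ≤ m → ∑ i ∈ Icc l r, ⟪xh i - y i, u (l-1)⟫ ≤ 0 := by
      intro r hlr hrm
      have h2T : 0 ≤ -2 * ∑ i ∈ Icc l r, ⟪xh i - y i, u (l-1)⟫ := by
        apply aux_eps (B := (r:ℝ) - l + 1) hg2
        intro ε hε1 hε2
        have bi := block_ineq hm y a b lam G hG xh hmin ha hb hl1 hlr hrm (-(ε • u (l-1)))
        rw [hsum2 r ε hlr, hLt2 ε hε1 hε2] at bi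
        have hRt2 : ‖xh r - xh (r+1) + -(ε • u (l-1))‖ - ‖xh r - xh (r+1)‖ ≤ ε := by
          have h5 := norm_add_le (xh r - xh (r+1)) (-(ε • u (l-1)))
          rw [norm_neg, norm_smul, hun2, mul_one, Real.norm_eq_abs, abs_of_pos hε1] at h5
          linarith
        have hRt2' : lam * (‖xh r - xh (r+1) + -(ε • u (l-1))‖ - ‖xh r - xh (r+1)‖) ≤ lam * ε :=
          mul_le_mul_of_nonneg_left hRt2 hlam0.le
        nlinarith [bi, hRt2', hε1]
      linarith
    -- jump monotonicity inequality going right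
    have hL2' : ∀ r : ℕ, l ≤ r → r < m → xh r ≠ xh (r+1) →
        lam + 2 * ∑ i ∈ Icc l r, ⟪xh i - y i, u (l-1)⟫ ≤ lam * ⟪u r, u (l-1)⟫ := by
      intro r hlr hrm hjr
      have hgr : 0 < ‖xh (r+1) - xh r‖ := norm_pos_iff.mpr (sub_ne_zero.mpr (Ne.symm hjr))
      have huvr : xh (r+1) - xh r = ‖xh (r+1) - xh r‖ • u r := by
        rw [hu r hjr, smul_smul, mul_inv_cancel₀ hgr.ne', one_smul]
      have key : 0 ≤ (-2 * ∑ i ∈ Icc l r, ⟪xh i - y i, u (l-1)⟫ + lam * ⟪u r, u (l-1)⟫ - lam) := by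
        apply aux_eps (B := ((r:ℝ) - l + 1) + lam/(2*‖xh (r+1) - xh r‖)) hg2
        intro ε hε1 hε2
        have bi := block_ineq hm y a b lam G hG xh hmin ha hb hl1 hlr hrm.le (-(ε • u (l-1)))
        rw [hsum2 r ε hlr, hLt2 ε hε1 hε2] at bi
        have hdne : xh r - xh (r+1) ≠ 0 := sub_ne_zero.mpr hjr
        have hexp := aux_norm_expand (xh r - xh (r+1)) (-(ε • u (l-1))) hdne
        have hd : xh r - xh (r+1) = -(‖xh (r+1) - xh r‖ • u r) := by
          rw [← huvr]; abel
        have hinner : ⟪xh r - xh (r+1), -(ε • u (l-1))⟫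
            = ε * (‖xh (r+1) - xh r‖ * ⟪u r, u (l-1)⟫) := by
          rw [hd, inner_neg_neg, real_inner_smul_left, real_inner_smul_right]
          ring
        have hnorm2 : ‖-(ε • u (l-1))‖^2 = ε^2 := by
          rw [norm_neg, norm_smul, hun2, mul_one, Real.norm_eq_abs, sq_abs]
        have hnrev : ‖xh r - xh (r+1)‖ = ‖xh (r+1) - xh r‖ := norm_sub_rev _ _
        rw [hinner, hnorm2, hnrev] at hexp
        have hQ : (2 * (ε * (‖xh (r+1) - xh r‖ * ⟪u r, u (l-1)⟫)) + ε^2) / (2*‖xh (r+1) - xh r‖)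
            = ε * ⟪u r, u (l-1)⟫ + ε^2 * (1/(2*‖xh (r+1) - xh r‖)) := by
          field_simp
        rw [hQ] at hexp
        have hexp' : lam * (‖xh r - xh (r+1) + -(ε • u (l-1))‖ - ‖xh (r+1) - xh r‖)
            ≤ lam * (ε * ⟪u r, u (l-1)⟫ + ε^2 * (1/(2*‖xh (r+1) - xh r‖))) :=
          mul_le_mul_of_nonneg_left hexp hlam0.le
        rw [hnrev] at bi
        have hfin : 0 ≤ ε * (-2 * ∑ i ∈ Icc l r, ⟪xh i - y i, u (l-1)⟫ + lam * ⟪u r, u (l-1)⟫ - lam)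
            + ε^2 * (((r:ℝ) - l + 1) + lam/(2*‖xh (r+1) - xh r‖)) := by
          have hlam2g : lam * (ε^2 * (1/(2*‖xh (r+1) - xh r‖)))
              = ε^2 * (lam/(2*‖xh (r+1) - xh r‖)) := by
            field_simp
          nlinarith [bi, hexp', hε1]
        nlinarith [hfin, hε1]
      linarith
    -- forward induction: inner products with u (l-1) are at least tt
    have hmono2 : ∀ d : ℕ, ∀ i : ℕ, l ≤ i → i ≤ l + d → i ≤ m → tt ≤ ⟪xh i, u (l-1)⟫ := by
      intro d
      induction d with
      | zero =>
        intro i h1 h2 h3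
        have : i = l := by omega
        rw [this, htt_def]
      | succ d ih =>
        intro i h1 h2 h3
        rcases Nat.lt_or_ge i (l + d + 1) with hlt | hge
        · exact ih i h1 (by omega) h3
        · have hieq : i = (l + d) + 1 := by omega
          set r := l + d with hr_def
          have hlr : l ≤ r := by omega
          have hrm2 : r < m := by omega
          have ihall : ∀ j : ℕ, l ≤ j → j ≤ r → tt ≤ ⟪xh j, u (l-1)⟫ :=
            fun j hj1 hj2 => ih j hj1 (by omega) (by omega)
          rw [hieq]
          by_cases hjr : xh r = xh (r+1)
          · rw [show (⟪xh (r+1), u (l-1)⟫) = ⟪xh r, u (l-1)⟫ by rw [hjr]]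
            exact ihall r hlr le_rfl
          · have hσ := hL2' r hlr hrm2 hjr
            have hcard2 : ((Icc l r).card : ℝ) = ((r + 1 - l : ℕ) : ℝ) := by
              rw [Nat.card_Icc]
            have hcast2 : ((r + 1 - l : ℕ) : ℝ) = (r:ℝ) - l + 1 := by
              rw [Nat.cast_sub (by omega)]
              push_cast; ring
            have hxsum : ((r + 1 - l : ℕ) : ℝ) * tt ≤ ∑ i ∈ Icc l r, ⟪xh i, u (l-1)⟫ := by
              have h6 := Finset.card_nsmul_le_sum (Icc l r)
                (fun i => ⟪xh i, u (l-1)⟫) tt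
                (fun i hi => by
                  simp only [Finset.mem_Icc] at hi
                  exact ihall i hi.1 hi.2)
              rw [nsmul_eq_mul] at h6
              rw [← hcard2]
              exact h6
            have hysum := hYsum (u (l-1)) hun2 l r hl1 hlr hrm2.le
            have hSsplit : ∑ i ∈ Icc l r, ⟪xh i - y i, u (l-1)⟫
                = ∑ i ∈ Icc l r, ⟪xh i, u (l-1)⟫ - ∑ i ∈ Icc l r, ⟪y i, u (l-1)⟫ := by
              rw [← Finset.sum_sub_distrib]
              exact Finset.sum_congr rfl (fun i _ => inner_sub_left _ _ _)
            have hsb := sqrt_bound (r + 1 - l) My tt htt0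
            rw [hcast2] at hsb
            have hTge : -(lam/2) ≤ ∑ i ∈ Icc l r, ⟪xh i - y i, u (l-1)⟫ := by
              rw [hSsplit]
              have habs := abs_le.mp hysum
              have h8 : ((r + 1 - l : ℕ) : ℝ) * tt ≤ ∑ i ∈ Icc l r, ⟪xh i, u (l-1)⟫ := hxsum
              rw [hcast2] at h8
              have h9 : My * Real.sqrt ((r:ℝ) - l + 1) - ((r:ℝ) - l + 1) * tt ≤ My^2/(4*tt) := hsb
              linarith [habs.2]
            have hσ0 : 0 ≤ ⟪u r, u (l-1)⟫ := by nlinarith [hσ, hTge, hlam0]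
            have huvr : xh (r+1) - xh r = ‖xh (r+1) - xh r‖ • u r := by
              rw [hu r hjr, smul_smul, mul_inv_cancel₀
                (norm_pos_iff.mpr (sub_ne_zero.mpr (Ne.symm hjr))).ne', one_smul]
            have e2 : ⟪xh (r+1) - xh r, u (l-1)⟫ = ⟪xh (r+1), u (l-1)⟫ - ⟪xh r, u (l-1)⟫ :=
              inner_sub_left _ _ _
            have e3 : ⟪xh (r+1) - xh r, u (l-1)⟫ = ‖xh (r+1) - xh r‖ * ⟪u r, u (l-1)⟫ := by
              conv_lhs => rw [huvr]
              rw [real_inner_smul_left]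
            have e4 : 0 ≤ ⟪xh (r+1), u (l-1)⟫ - ⟪xh r, u (l-1)⟫ := by
              rw [← e2, e3]
              exact mul_nonneg (norm_nonneg _) hσ0
            linarith [ihall r hlr le_rfl]
    have hmono2' : ∀ i : ℕ, l ≤ i → i ≤ m → tt ≤ ⟪xh i, u (l-1)⟫ :=
      fun i h1 h2 => hmono2 (m - l) i h1 (by omega) h2
    -- conclude
    have hTm := hT m hlm le_rfl
    have hcardm : ((Icc l m).card : ℝ) = ((m + 1 - l : ℕ) : ℝ) := by rw [Nat.card_Icc]
    have hcastm : ((m + 1 - l : ℕ) : ℝ) = (m:ℝ) - l + 1 := by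
      rw [Nat.cast_sub (by omega)]
      push_cast; ring
    have hxsumm : ((m + 1 - l : ℕ) : ℝ) * tt ≤ ∑ i ∈ Icc l m, ⟪xh i, u (l-1)⟫ := by
      have h6 := Finset.card_nsmul_le_sum (Icc l m)
        (fun i => ⟪xh i, u (l-1)⟫) tt
        (fun i hi => by
          simp only [Finset.mem_Icc] at hi
          exact hmono2' i hi.1 hi.2)
      rw [nsmul_eq_mul] at h6
      rw [← hcardm]
      exact h6
    rw [hcastm] at hxsumm
    have hysumm := hYsum (u (l-1)) hun2 l m hl1 hlm le_rfl
    have hSsplitm : ∑ i ∈ Icc l m, ⟪xh i - y i, u (l-1)⟫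
        = ∑ i ∈ Icc l m, ⟪xh i, u (l-1)⟫ - ∑ i ∈ Icc l m, ⟪y i, u (l-1)⟫ := by
      rw [← Finset.sum_sub_distrib]
      exact Finset.sum_congr rfl (fun i _ => inner_sub_left _ _ _)
    have hntt : ((m:ℝ) - l + 1) * tt ≤ My * Real.sqrt ((m:ℝ) - l + 1) := by
      rw [hSsplitm] at hTm
      have habs := abs_le.mp hysumm
      linarith [hxsumm, habs.2]
    have hsqm : Real.sqrt ((m:ℝ) - (l:ℝ) + 1) = Real.sqrt (((m + 1 - l : ℕ) : ℝ)) := by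
      rw [hcastm]
    rw [hsqm, ← hcastm] at hntt
    have hfinm : ((m + 1 - l : ℕ) : ℝ) * tt^2 ≤ My^2 :=
      final_bound (m + 1 - l) My tt hMy htt0 (by omega) hntt
    have hcast : ((m + 1 - l : ℕ) : ℝ) ≤ My^2 / ⟪u (l-1), xh l⟫^2 := by
      have httpos : (0:ℝ) < tt^2 := pow_pos htt0 2
      rw [httc, le_div_iff₀ httpos]
      linarith
    have hfl : m + 1 - l ≤ ⌊My ^ 2 / ⟪u (l-1), xh l⟫ ^ 2⌋₊ := Nat.le_floor hcast
    omega
end
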